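/- arXiv:1602.03963 — 4 statements merged into one kernel-verified Lean document; each statement's English description precedes it below -/
import Mathlib

section
/- Assume the interaction graph G = (V, I) is acyclic. Then for every pair {i,j} ∈ E, the influence satisfies w_{{i,j}} = |Pr(y = +1 | x_i = +1, x_j = +1) − Pr(y = +1 | x_i = +1, x_j = −1)|. -/
open Finset

/-- The sigmoid function `σ(t) = eᵗ/(1+eᵗ)`. -/
noncomputable def sigmoid (t : ℝ) : ℝ := Real.exp t / (1 + Real.exp t)

/-- Interpretation of a Boolean as `±1 ∈ ℝ`. -/
def pm (b : Bool) : ℝ := if b then 1 else -1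

/-- `Σ_{{i,j}∈E} β_{{i,j}} x_i x_j`, summed over unordered pairs of distinct indices. -/
noncomputable def fld (d : ℕ) (β : Fin d → Fin d → ℝ) (x : Fin d → Bool) : ℝ :=
  ∑ i : Fin d, ∑ j ∈ Finset.Ioi i, β i j * pm (x i) * pm (x j)

/-- `Pr(y = s·(+1) | x_V ∈ A)`.  Since the covariates are i.i.d. uniform on `{−1,+1}`
and `Pr(y = s | x_V = x) = σ(s · Σ β x_i x_j)`, this conditional probability equals
`(Σ_{x∈A} σ(s · fld x)) / |A|`. -/
noncomputable def condProbY (d : ℕ) (β : Fin d → Fin d → ℝ) (s : ℝ)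
    (A : Finset (Fin d → Bool)) : ℝ :=
  (∑ x ∈ A, sigmoid (s * fld d β x)) / A.card

open scoped Classical in
/-- The influence `w_e = |2·Pr(y = +1 | x_i = +1, x_j = +1) − 1|` for `e = {i,j}`. -/
noncomputable def wgt (d : ℕ) (β : Fin d → Fin d → ℝ) (e : Sym2 (Fin d)) : ℝ :=
  |2 * condProbY d β 1 (Finset.univ.filter (fun x => ∀ v ∈ e, x v = true)) - 1|

/-- The interaction graph `G = (V, I)` with `I = {{i,j} : β_{{i,j}} ≠ 0}`. -/
def interGraph (d : ℕ) (β : Fin d → Fin d → ℝ) : SimpleGraph (Fin d) :=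
  SimpleGraph.fromRel (fun i j => β i j ≠ 0)

lemma path_length_eq_dist {V : Type*} {G : SimpleGraph V} (h : G.IsAcyclic)
    {a b : V} (p : G.Walk a b) (hp : p.IsPath) : p.length = G.dist a b := by
  classical
  have hr : G.Reachable a b := ⟨p⟩
  obtain ⟨q, hq⟩ := hr.exists_walk_length_eq_dist
  have h1 : (⟨p, hp⟩ : G.Path a b) = ⟨q.bypass, q.bypass_isPath⟩ := h.path_unique _ _
  have h2 : p = q.bypass := congrArg Subtype.val h1
  have h3 : q.bypass.length ≤ q.length := SimpleGraph.Walk.length_bypass_le q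
  have h4 := SimpleGraph.dist_le p
  have h5 : p.length = q.bypass.length := by rw [h2]
  omega

lemma adj_parity {V : Type*} {G : SimpleGraph V} (h : G.IsAcyclic)
    {r u v : V} (hru : G.Reachable r u) (huv : G.Adj u v) :
    ¬ (Odd (G.dist r u) ↔ Odd (G.dist r v)) := by
  classical
  obtain ⟨w⟩ := hru
  set p := w.bypass with hpdef
  have hp : p.IsPath := w.bypass_isPath
  have hlen : p.length = G.dist r u := path_length_eq_dist h p hp
  by_cases hv : v ∈ p.support
  · have htake : (p.takeUntil v hv).IsPath := hp.takeUntil hv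
    have hdrop : (p.dropUntil v hv).IsPath := hp.dropUntil hv
    have hedge : (SimpleGraph.Walk.cons huv.symm SimpleGraph.Walk.nil : G.Walk v u).IsPath := by
      simp [SimpleGraph.Walk.cons_isPath_iff, huv.ne']
    have heq : (⟨p.dropUntil v hv, hdrop⟩ : G.Path v u)
        = ⟨SimpleGraph.Walk.cons huv.symm SimpleGraph.Walk.nil, hedge⟩ := h.path_unique _ _
    have hlen1 : (p.dropUntil v hv).length = 1 := by
      have := congrArg (fun q : G.Path v u => q.val.length) heq
      simpa using this
    have hlsum : (p.takeUntil v hv).length + (p.dropUntil v hv).length = p.length := by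
      rw [← SimpleGraph.Walk.length_append, SimpleGraph.Walk.take_spec p hv]
    have hdv : (p.takeUntil v hv).length = G.dist r v := path_length_eq_dist h _ htake
    rw [Nat.odd_iff, Nat.odd_iff]
    omega
  · have hcp : (SimpleGraph.Walk.cons huv.symm p.reverse : G.Walk v r).IsPath := by
      rw [SimpleGraph.Walk.cons_isPath_iff]
      refine ⟨hp.reverse, ?_⟩
      rwa [SimpleGraph.Walk.support_reverse, List.mem_reverse]
    have hdv : (SimpleGraph.Walk.cons huv.symm p.reverse).length = G.dist v r :=
      path_length_eq_dist h _ hcp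
    rw [SimpleGraph.Walk.length_cons, SimpleGraph.Walk.length_reverse] at hdv
    rw [SimpleGraph.dist_comm] at hdv
    rw [Nat.odd_iff, Nat.odd_iff]
    omega

lemma exists_coloring {V : Type*} {G : SimpleGraph V} (h : G.IsAcyclic) (i : V) :
    ∃ g : V → Bool, g i = false ∧ ∀ u v, G.Adj u v → g u ≠ g v := by
  classical
  let base : V → Bool := fun u =>
    decide (Odd (G.dist (G.connectedComponentMk u).out u))
  refine ⟨fun u => (base u) != (if G.connectedComponentMk u = G.connectedComponentMk i
      then base i else false), by simp, ?_⟩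
  intro u v huv
  have hcomp : G.connectedComponentMk u = G.connectedComponentMk v :=
    SimpleGraph.ConnectedComponent.connectedComponentMk_eq_of_adj huv
  have hbase : base u ≠ base v := by
    have hr : G.Reachable (G.connectedComponentMk u).out u := by
      have : G.connectedComponentMk (G.connectedComponentMk u).out = G.connectedComponentMk u :=
        (G.connectedComponentMk u).out_eq
      exact SimpleGraph.ConnectedComponent.exact this
    have hpar := adj_parity h hr huv
    simp only [base, ← hcomp, ne_eq, decide_eq_decide]
    exact hpar
  have key : ∀ a b c : Bool, a ≠ b → (a != c) ≠ (b != c) := by decide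
  simpa only [hcomp] using key _ _ _ hbase

lemma pm_xor (a b : Bool) : pm (xor a b) = -(pm a * pm b) := by
  cases a <;> cases b <;> simp [pm]

lemma sigmoid_neg (t : ℝ) : sigmoid (-t) = 1 - sigmoid t := by
  have h1 : (0:ℝ) < 1 + Real.exp t := by positivity
  have h2 : (0:ℝ) < 1 + Real.exp (-t) := by positivity
  unfold sigmoid
  rw [Real.exp_neg]
  have he : Real.exp t ≠ 0 := (Real.exp_pos t).ne'
  field_simp
  ring

lemma fld_flip (d : ℕ) (β : Fin d → Fin d → ℝ) (g : Fin d → Bool)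
    (hg : ∀ u v, u ≠ v → β u v ≠ 0 → g u ≠ g v) (x : Fin d → Bool) :
    fld d β (fun v => xor (x v) (g v)) = - fld d β x := by
  unfold fld
  rw [← Finset.sum_neg_distrib]
  refine Finset.sum_congr rfl fun a _ => ?_
  rw [← Finset.sum_neg_distrib]
  refine Finset.sum_congr rfl fun b hb => ?_
  have hab : a ≠ b := (Finset.mem_Ioi.mp hb).ne
  by_cases h0 : β a b = 0
  · simp [h0]
  · have hgab : g a ≠ g b := hg a b hab h0
    have : pm (g a) * pm (g b) = -1 := by
      cases ha : g a <;> cases hbb : g b <;> simp_all [pm]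
    rw [pm_xor, pm_xor]
    linear_combination β a b * pm (x a) * pm (x b) * this

lemma sum_sigmoid_half (d : ℕ) (β : Fin d → Fin d → ℝ) (g : Fin d → Bool)
    (hg : ∀ u v, u ≠ v → β u v ≠ 0 → g u ≠ g v) (i : Fin d) (hgi : g i = false) :
    2 * ∑ x ∈ Finset.univ.filter (fun x : Fin d → Bool => x i = true), sigmoid (fld d β x)
      = (Finset.univ.filter (fun x : Fin d → Bool => x i = true)).card := by
  classical
  set C := Finset.univ.filter (fun x : Fin d → Bool => x i = true) with hC
  set τ : (Fin d → Bool) → (Fin d → Bool) := fun x v => xor (x v) (g v) with hτ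
  have hτC : ∀ x ∈ C, τ x ∈ C := by
    intro x hx
    simp only [hC, Finset.mem_filter, Finset.mem_univ, true_and] at hx ⊢
    simp [hτ, hgi, hx]
  have hτinv : ∀ x, τ (τ x) = x := by
    intro x; funext v; simp [hτ, Bool.xor_assoc]
  have hre : ∑ x ∈ C, sigmoid (fld d β (τ x)) = ∑ x ∈ C, sigmoid (fld d β x) := by
    refine Finset.sum_nbij' (i := τ) (j := τ) hτC hτC ?_ ?_ ?_
    · intro x _; exact hτinv x
    · intro x _; exact hτinv x
    · intro x _; rfl
  have hflip : ∀ x, sigmoid (fld d β (τ x)) = 1 - sigmoid (fld d β x) := by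
    intro x
    rw [show fld d β (τ x) = - fld d β x from fld_flip d β g hg x, sigmoid_neg]
  calc 2 * ∑ x ∈ C, sigmoid (fld d β x)
      = ∑ x ∈ C, sigmoid (fld d β x) + ∑ x ∈ C, sigmoid (fld d β (τ x)) := by
        rw [hre]; ring
    _ = ∑ x ∈ C, (sigmoid (fld d β x) + (1 - sigmoid (fld d β x))) := by
        rw [← Finset.sum_add_distrib]
        exact Finset.sum_congr rfl fun x _ => by rw [hflip]
    _ = C.card := by simp


/-- Proposition 1, Influence: if the interaction graph is acyclic, then
`w_{{i,j}} = |Pr(y=+1|x_i=+1,x_j=+1) − Pr(y=+1|x_i=+1,x_j=−1)|` for every pair `{i,j} ∈ E`. -/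
theorem statement0 (d : ℕ) (hd : 2 ≤ d) (β : Fin d → Fin d → ℝ)
    (hsymm : ∀ i j, β i j = β j i)
    (hacyc : (interGraph d β).IsAcyclic)
    (i j : Fin d) (hij : i ≠ j) :
    wgt d β s(i, j) =
      |condProbY d β 1 (Finset.univ.filter (fun x => x i = true ∧ x j = true)) -
        condProbY d β 1 (Finset.univ.filter (fun x => x i = true ∧ x j = false))| := by
  classical
  obtain ⟨g, hgi, hgadj⟩ := exists_coloring hacyc i
  have hg : ∀ u v, u ≠ v → β u v ≠ 0 → g u ≠ g v := by
    intro u v huv hb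
    exact hgadj u v ⟨huv, Or.inl hb⟩
  set A := Finset.univ.filter (fun x : Fin d → Bool => x i = true ∧ x j = true) with hA
  set B := Finset.univ.filter (fun x : Fin d → Bool => x i = true ∧ x j = false) with hB
  set C := Finset.univ.filter (fun x : Fin d → Bool => x i = true) with hC
  -- the wgt filter set equals A
  have hwset : (Finset.univ.filter (fun x : Fin d → Bool => ∀ v ∈ s(i,j), x v = true)) = A := by
    ext x
    simp only [hA, Finset.mem_filter, Finset.mem_univ, true_and, Sym2.mem_iff]
    constructor
    · intro h; exact ⟨h i (Or.inl rfl), h j (Or.inr rfl)⟩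
    · rintro ⟨h1, h2⟩ v (rfl | rfl) <;> assumption
  -- A and B partition C
  have hAC : A = C.filter (fun x => x j = true) := by
    ext x; simp [hA, hC, Finset.mem_filter, and_assoc, and_comm]
  have hBC : B = C.filter (fun x => ¬ (x j = true)) := by
    ext x; simp [hB, hC, Finset.mem_filter]
  have hsum : (∑ x ∈ A, sigmoid (fld d β x)) + (∑ x ∈ B, sigmoid (fld d β x))
      = ∑ x ∈ C, sigmoid (fld d β x) := by
    rw [hAC, hBC]
    exact Finset.sum_filter_add_sum_filter_not C _ _
  have hcard : A.card + B.card = C.card := by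
    rw [hAC, hBC]
    exact Finset.card_filter_add_card_filter_not _
  -- A and B have equal cardinality
  have hcardAB : A.card = B.card := by
    refine Finset.card_nbij' (i := fun x => Function.update x j (!(x j)))
      (j := fun x => Function.update x j (!(x j))) ?_ ?_ ?_ ?_
    · intro x hx
      simp only [hA, hB, Finset.mem_coe, Finset.mem_filter, Finset.mem_univ, true_and] at hx ⊢
      simp [Function.update_of_ne hij, Function.update_self, hx.1, hx.2]
    · intro x hx
      simp only [hA, hB, Finset.mem_coe, Finset.mem_filter, Finset.mem_univ, true_and] at hx ⊢
      simp [Function.update_of_ne hij, Function.update_self, hx.1, hx.2]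
    · intro x _
      funext v
      by_cases hv : v = j
      · subst hv; simp
      · simp [Function.update_of_ne hv]
    · intro x _
      funext v
      by_cases hv : v = j
      · subst hv; simp
      · simp [Function.update_of_ne hv]
  have hAne : A.Nonempty := ⟨fun _ => true, by simp [hA]⟩
  have hApos : (0:ℝ) < A.card := by exact_mod_cast Finset.card_pos.mpr hAne
  have hhalf := sum_sigmoid_half d β g hg i hgi
  rw [← hC] at hhalf
  -- P_A + P_B = 1
  have hkey : condProbY d β 1 A + condProbY d β 1 B = 1 := by
    unfold condProbY
    simp only [one_mul]
    rw [← hcardAB]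
    rw [← add_div, hsum]
    rw [div_eq_one_iff_eq hApos.ne']
    have : (C.card : ℝ) = 2 * A.card := by
      rw [← hcard, hcardAB]; push_cast; ring
    nlinarith [hhalf, this]
  unfold wgt
  rw [hwset]
  have : condProbY d β 1 B = 1 - condProbY d β 1 A := by linarith
  rw [this]
  congr 1
  ring
end

section
/- Assume the interaction graph G = (V, I) is acyclic. Then for any two distinct i, j ∈ V, if i and j are disconnected in G, or if the unique path between i and j in G has even length, then w_{{i,j}} = 0. -/
open Finset

open Finset SimpleGraph

/-- In an acyclic graph, paths from a common vertex to two adjacent vertices have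
lengths differing by exactly one. -/
lemma path_parity_aux {V : Type*} [DecidableEq V] {G : SimpleGraph V}
    (hac : G.IsAcyclic) {a u v : V} (huv : G.Adj u v)
    (p : G.Path a u) (q : G.Path a v) :
    p.1.length = q.1.length + 1 ∨ q.1.length = p.1.length + 1 := by
  have huniq := SimpleGraph.isAcyclic_iff_path_unique.mp hac
  by_cases hv : v ∈ p.1.support
  · left
    have h1 : (⟨p.1.takeUntil v hv, p.2.takeUntil hv⟩ : G.Path a v) = q := huniq _ _
    have h2 : (⟨p.1.dropUntil v hv, p.2.dropUntil hv⟩ : G.Path v u) = Path.singleton huv.symm :=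
      huniq _ _
    have hlen := congrArg Walk.length (p.1.take_spec hv)
    rw [Walk.length_append] at hlen
    have e1 : (p.1.takeUntil v hv).length = q.1.length := congrArg (fun r => r.1.length) h1
    have e2 : (p.1.dropUntil v hv).length = 1 := by
      have := congrArg (fun r => r.1.length) h2
      simpa [Path.singleton] using this
    omega
  · right
    have hp : (p.1.concat huv).IsPath := by
      rw [← Walk.isPath_reverse_iff, Walk.reverse_concat]
      exact (p.1.isPath_reverse_iff.mpr p.2).cons (by simpa using hv)
    have h1 : (⟨p.1.concat huv, hp⟩ : G.Path a v) = q := huniq _ _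
    have := congrArg (fun r => r.1.length) h1
    simpa [Walk.length_concat] using this.symm

/-- Existence of a proper 2-colouring (as `Bool`) of an acyclic graph giving `i` and `j`
the colour `false`, provided `i,j` are disconnected or joined by an even path. -/
lemma exists_col {V : Type*} [DecidableEq V] {G : SimpleGraph V} (hac : G.IsAcyclic)
    (i j : V) (h : ¬ G.Reachable i j ∨ ∃ p : G.Path i j, Even p.1.length) :
    ∃ c : V → Bool, c i = false ∧ c j = false ∧ ∀ u v, G.Adj u v → c u ≠ c v := by
  classical
  set anchor : V → V := fun v =>
    if G.Reachable i v then i else if G.Reachable j v then j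
    else Quot.out (G.connectedComponentMk v) with hanchor
  have hreach : ∀ v, G.Reachable (anchor v) v := by
    intro v
    simp only [hanchor]
    split_ifs with h1 h2
    · exact h1
    · exact h2
    · exact SimpleGraph.ConnectedComponent.exact (Quot.out_eq _)
  have hanch : ∀ u v, G.Reachable u v → anchor u = anchor v := by
    intro u v huv
    simp only [hanchor]
    by_cases h1 : G.Reachable i u
    · simp [h1, h1.trans huv]
    · have h1' : ¬ G.Reachable i v := fun hc => h1 (hc.trans huv.symm)
      by_cases h2 : G.Reachable j u
      · simp [h1, h1', h2, h2.trans huv]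
      · have h2' : ¬ G.Reachable j v := fun hc => h2 (hc.trans huv.symm)
        simp [h1, h1', h2, h2', SimpleGraph.ConnectedComponent.sound huv]
  set P : ∀ v, G.Path (anchor v) v := fun v => ((hreach v).some).toPath with hP
  refine ⟨fun v => decide (Odd ((P v).1.length)), ?_, ?_, ?_⟩
  · have key : ∀ (b : V), b = i → ∀ (p : G.Path b i), ¬ Odd p.1.length := by
      rintro b rfl p
      rw [SimpleGraph.Path.loop_eq p]
      simp [SimpleGraph.Path.nil]
    have hrii : G.Reachable i i := Reachable.refl i
    have hai : anchor i = i := by simp [hanchor, hrii]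
    simpa using key (anchor i) hai (P i)
  · rcases h with hnr | ⟨p0, hp0⟩
    · have key : ∀ (b : V), b = j → ∀ (p : G.Path b j), ¬ Odd p.1.length := by
        rintro b rfl p
        rw [SimpleGraph.Path.loop_eq p]
        simp [SimpleGraph.Path.nil]
      have haj : anchor j = j := by
        have hrjj : G.Reachable j j := Reachable.refl j
        simp [hanchor, hnr, hrjj]
      simpa using key (anchor j) haj (P j)
    · have key : ∀ (b : V), b = i → ∀ (p : G.Path b j), ¬ Odd p.1.length := by
        rintro b rfl p
        rw [SimpleGraph.isAcyclic_iff_path_unique.mp hac p p0]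
        exact (Nat.not_odd_iff_even).mpr hp0
      have hrij : G.Reachable i j := ⟨p0.1⟩
      have haj : anchor j = i := by
        simp [hanchor, hrij]
      simpa using key (anchor j) haj (P j)
  · intro u v huv
    have hav : anchor v = anchor u := (hanch u v huv.reachable).symm
    have key : ∀ (b : V), b = anchor u → ∀ (q : G.Path b v),
        decide (Odd ((P u).1.length)) ≠ decide (Odd q.1.length) := by
      rintro b rfl q
      rcases path_parity_aux hac huv (P u) q with hl | hl <;>
        · simp only [ne_eq, decide_eq_decide, Nat.odd_iff]
          omega
    exact key (anchor v) hav (P v)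
lemma sigmoid_add_neg (t : ℝ) : sigmoid t + sigmoid (-t) = 1 := by
  unfold sigmoid
  rw [Real.exp_neg]
  have h : (0:ℝ) < Real.exp t := Real.exp_pos t
  have h1 : (1:ℝ) + Real.exp t ≠ 0 := by positivity
  have h2 : (1:ℝ) + (Real.exp t)⁻¹ ≠ 0 := by positivity
  field_simp
  ring

/-- Proposition 3, Zero influence: if the interaction graph is acyclic
and `i ≠ j` are either disconnected, or the (unique) path between them has even length,
then `w_{{i,j}} = 0`. -/
theorem statement2 (d : ℕ) (hd : 2 ≤ d) (β : Fin d → Fin d → ℝ)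
    (hsymm : ∀ i j, β i j = β j i)
    (hacyc : (interGraph d β).IsAcyclic)
    (i j : Fin d) (hij : i ≠ j)
    (h : ¬ (interGraph d β).Reachable i j ∨
      ∃ p : (interGraph d β).Path i j, Even p.1.length) :
    wgt d β s(i, j) = 0 := by
  classical
  obtain ⟨c, hci, hcj, hcadj⟩ := exists_col hacyc i j h
  set T : (Fin d → Bool) → (Fin d → Bool) := fun x v => xor (x v) (c v) with hT
  unfold wgt
  rw [abs_eq_zero]
  set A := (Finset.univ.filter (fun x : Fin d → Bool => ∀ v ∈ (s(i,j) : Sym2 (Fin d)), x v = true)) with hA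
  have hmemA : ∀ x, x ∈ A ↔ (x i = true ∧ x j = true) := by
    intro x
    simp only [hA, Finset.mem_filter, Finset.mem_univ, true_and, Sym2.mem_iff]
    constructor
    · intro hx; exact ⟨hx i (Or.inl rfl), hx j (Or.inr rfl)⟩
    · rintro ⟨h1, h2⟩ v (rfl | rfl) <;> assumption
  have hTmem : ∀ x ∈ A, T x ∈ A := by
    intro x hx
    rw [hmemA] at hx ⊢
    simp [hT, hci, hcj, hx.1, hx.2]
  have hTT : ∀ x, T (T x) = x := by
    intro x; funext v; simp [hT]
  have hflip : ∀ x, fld d β (T x) = - fld d β x := by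
    intro x
    unfold fld
    rw [← Finset.sum_neg_distrib]
    refine Finset.sum_congr rfl fun u _ => ?_
    rw [← Finset.sum_neg_distrib]
    refine Finset.sum_congr rfl fun v hv => ?_
    by_cases hb : β u v = 0
    · simp [hb]
    · have hne : u ≠ v := (Finset.mem_Ioi.mp hv).ne
      have hadj : (interGraph d β).Adj u v :=
        (SimpleGraph.fromRel_adj _ _ _).mpr ⟨hne, Or.inl hb⟩
      have hcuv := hcadj u v hadj
      cases hcu : c u <;> cases hcv : c v <;> rw [hcu, hcv] at hcuv
      · exact absurd rfl hcuv
      · cases hxu : x u <;> cases hxv : x v <;>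
          simp [hT, pm, hcu, hcv, hxu, hxv] <;> ring
      · cases hxu : x u <;> cases hxv : x v <;>
          simp [hT, pm, hcu, hcv, hxu, hxv] <;> ring
      · exact absurd rfl hcuv
  have hsum : ∑ x ∈ A, sigmoid (1 * fld d β x)
      = ∑ x ∈ A, sigmoid (- fld d β x) := by
    refine Finset.sum_nbij' T T hTmem hTmem (fun x _ => hTT x) (fun x _ => hTT x)
      (fun x hx => ?_)
    rw [one_mul, hflip, neg_neg]
  have h2S : 2 * (∑ x ∈ A, sigmoid (1 * fld d β x)) = (A.card : ℝ) := by
    rw [two_mul]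
    nth_rewrite 2 [hsum]
    rw [← Finset.sum_add_distrib]
    simp only [one_mul, sigmoid_add_neg]
    simp
  have hAne : A.Nonempty := ⟨fun _ => true, by rw [hmemA]; exact ⟨rfl, rfl⟩⟩
  have hcard : (0:ℝ) < (A.card : ℝ) := by
    exact_mod_cast Finset.card_pos.mpr hAne
  unfold condProbY
  simp only [one_mul] at h2S ⊢
  field_simp
  linarith [h2S]
end

section
/- Let V be a finite set with |V| ≥ 2, let E be the set of unordered pairs of distinct elements of V, let G = (V, I) be an acyclic simple graph with edge set I ⊆ E, and let D := {{i,j} ∈ E : i and j are disconnected in G}. Let u : E → ℝ be a weight assignment satisfying: (1) strict separation: there exists a real constant η ≥ 0 such that u_{{i,j}} > η ≥ u_{{k,l}} for every {i,j} ∈ I and every {k,l} ∈ D; and (2) local dominance: u_{{i_1,i_{m+1}}} < u_{{i_s,i_{s+1}}} for every path {{i_1,i_2},{i_2,i_3},…,{i_m,i_{m+1}}} of length m ≥ 2 in G and every s ∈ {1,…,m}. Then for every maximum-weight spanning tree T (of the complete graph on V) with respect to u, one has I = T ∩ W, where W := {{i,j} ∈ E : u_{{i,j}} > η}. -/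
open Finset

/-- `T` is a spanning tree of the complete graph on `V`: a set of `|V| − 1` non-loop edges
forming a connected acyclic graph on `V`. -/
def IsSpanningTree {V : Type*} [Fintype V] (T : Finset (Sym2 V)) : Prop :=
  T.card = Fintype.card V - 1 ∧ (∀ e ∈ T, ¬ e.IsDiag) ∧
    (SimpleGraph.fromEdgeSet (T : Set (Sym2 V))).Connected ∧
    (SimpleGraph.fromEdgeSet (T : Set (Sym2 V))).IsAcyclic

/-- `T` is a maximum-weight spanning tree of the complete graph on `V` with respect to the
weight assignment `u`. -/
def IsMaxSpanningTree {V : Type*} [Fintype V] (u : Sym2 V → ℝ) (T : Finset (Sym2 V)) : Prop :=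
  IsSpanningTree T ∧ ∀ T' : Finset (Sym2 V), IsSpanningTree T' → ∑ e ∈ T', u e ≤ ∑ e ∈ T, u e

section Aux

lemma auxAcyclicMono {G H : SimpleGraph V} (h : H ≤ G) (hG : G.IsAcyclic) : H.IsAcyclic :=
  fun _ c hc => hG (c.mapLe h) (hc.mapLe h)

lemma auxChain {H : SimpleGraph V} (v : ℕ → V) :
    ∀ n : ℕ, (∀ i, i < n → H.Reachable (v i) (v (i + 1))) → H.Reachable (v 0) (v n) := by
  intro n
  induction n with
  | zero => intro _; rfl
  | succ n ih =>
    intro h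
    exact (ih fun i hi => h i (Nat.lt_succ_of_lt hi)).trans (h n (Nat.lt_succ_self n))

lemma auxGetVertInj {G : SimpleGraph V} {x y : V} (p : G.Walk x y) (hp : p.IsPath) :
    ∀ m n, m ≤ p.length → n ≤ p.length → p.getVert m = p.getVert n → m = n := by
  induction p with
  | nil => intro m n hm hn _; simp at hm hn; omega
  | @cons u c y h q ih =>
    intro m n hm hn heq
    rw [SimpleGraph.Walk.cons_isPath_iff] at hp
    match m, n with
    | 0, 0 => rfl
    | 0, n + 1 =>
      exfalso
      apply hp.2
      rw [SimpleGraph.Walk.mem_support_iff_exists_getVert]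
      refine ⟨n, ?_, ?_⟩
      · rw [← SimpleGraph.Walk.getVert_cons_succ q h, ← heq, SimpleGraph.Walk.getVert_zero]
      · simp only [SimpleGraph.Walk.length_cons] at hn; omega
    | m + 1, 0 =>
      exfalso
      apply hp.2
      rw [SimpleGraph.Walk.mem_support_iff_exists_getVert]
      refine ⟨m, ?_, ?_⟩
      · rw [← SimpleGraph.Walk.getVert_cons_succ q h, heq, SimpleGraph.Walk.getVert_zero]
      · simp only [SimpleGraph.Walk.length_cons] at hm; omega
    | m + 1, n + 1 =>
      simp only [SimpleGraph.Walk.length_cons] at hm hn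
      rw [SimpleGraph.Walk.getVert_cons_succ, SimpleGraph.Walk.getVert_cons_succ] at heq
      have := ih hp.1 m n (by omega) (by omega) heq
      omega

lemma auxEdgeMem {G : SimpleGraph V} {x y : V} (p : G.Walk x y) :
    ∀ i, i < p.length → s(p.getVert i, p.getVert (i + 1)) ∈ p.edges := by
  induction p with
  | nil => intro i hi; simp at hi
  | @cons u c y h q ih =>
    intro i hi
    match i with
    | 0 =>
      rw [SimpleGraph.Walk.getVert_zero, SimpleGraph.Walk.getVert_cons_succ,
        SimpleGraph.Walk.getVert_zero]
      simp [SimpleGraph.Walk.edges_cons]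
    | i + 1 =>
      rw [SimpleGraph.Walk.getVert_cons_succ, SimpleGraph.Walk.getVert_cons_succ]
      simp only [SimpleGraph.Walk.length_cons] at hi
      simp [SimpleGraph.Walk.edges_cons, ih i (by omega)]

lemma auxMemEdge {G : SimpleGraph V} {x y : V} (p : G.Walk x y) {e : Sym2 V} (he : e ∈ p.edges) :
    ∃ i, i < p.length ∧ e = s(p.getVert i, p.getVert (i + 1)) := by
  induction p with
  | nil => simp at he
  | @cons u c y h q ih =>
    rw [SimpleGraph.Walk.edges_cons, List.mem_cons] at he
    rcases he with he | he
    · exact ⟨0, by simp [SimpleGraph.Walk.length_cons], by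
        rw [SimpleGraph.Walk.getVert_zero, SimpleGraph.Walk.getVert_cons_succ,
          SimpleGraph.Walk.getVert_zero]; exact he⟩
    · obtain ⟨i, hi, hie⟩ := ih he
      exact ⟨i + 1, by simp [SimpleGraph.Walk.length_cons]; omega, by
        rw [SimpleGraph.Walk.getVert_cons_succ, SimpleGraph.Walk.getVert_cons_succ]; exact hie⟩

lemma auxAcyclicSup {K : SimpleGraph V} (hK : K.IsAcyclic) {i j : V} (hij : i ≠ j)
    (hnr : ¬ K.Reachable i j) : (K ⊔ SimpleGraph.fromEdgeSet {s(i, j)}).IsAcyclic := by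
  intro v c hc
  by_cases he : s(i, j) ∈ c.edges
  · have hadj : (K ⊔ SimpleGraph.fromEdgeSet {s(i, j)}).Adj i j :=
      Or.inr ((SimpleGraph.fromEdgeSet_adj _).2 ⟨rfl, hij⟩)
    have hle : (K ⊔ SimpleGraph.fromEdgeSet {s(i, j)}) \ SimpleGraph.fromEdgeSet {s(i, j)} ≤ K := by
      intro x y hxy
      rw [SimpleGraph.sdiff_adj, SimpleGraph.sup_adj] at hxy
      tauto
    have hbr : (K ⊔ SimpleGraph.fromEdgeSet {s(i, j)}).IsBridge s(i, j) := by
      rw [SimpleGraph.isBridge_iff]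
      exact fun hr => hnr (hr.mono hle)
    exact hbr.notMem_edges_of_isCycle hc he
  · have hsub : ∀ e' ∈ c.edges, e' ∈ K.edgeSet := by
      intro e' he'
      have h1 := c.edges_subset_edgeSet he'
      rw [SimpleGraph.edgeSet_sup, SimpleGraph.edgeSet_fromEdgeSet] at h1
      rcases h1 with h1 | h1
      · exact h1
      · exact absurd (h1.1 ▸ he') he
    exact hK (c.transfer K hsub) (hc.transfer hsub)

lemma auxSideGen {K : SimpleGraph V} {a b : V} :
    ∀ {v c : V}, K.Walk v c →
      (K \ SimpleGraph.fromEdgeSet {s(a, b)}).Reachable v c ∨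
      (K \ SimpleGraph.fromEdgeSet {s(a, b)}).Reachable v a ∨
      (K \ SimpleGraph.fromEdgeSet {s(a, b)}).Reachable v b := by
  intro v c w
  induction w with
  | nil => exact Or.inl (SimpleGraph.Reachable.refl _)
  | @cons u x _ h q ih =>
    by_cases he : s(u, x) = s(a, b)
    · rw [Sym2.eq_iff] at he
      rcases he with ⟨h1, _⟩ | ⟨h1, _⟩
      · exact Or.inr (Or.inl (h1 ▸ SimpleGraph.Reachable.refl _))
      · exact Or.inr (Or.inr (h1 ▸ SimpleGraph.Reachable.refl _))
    · have hadj : (K \ SimpleGraph.fromEdgeSet {s(a, b)}).Adj u x := by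
        rw [SimpleGraph.sdiff_adj]
        exact ⟨h, fun hc => he ((SimpleGraph.fromEdgeSet_adj _).mp hc).1⟩
      rcases ih with h1 | h1 | h1
      · exact Or.inl (hadj.reachable.trans h1)
      · exact Or.inr (Or.inl (hadj.reachable.trans h1))
      · exact Or.inr (Or.inr (hadj.reachable.trans h1))

lemma auxSide {K : SimpleGraph V} {a b v : V} (w : K.Walk v a) :
    (K \ SimpleGraph.fromEdgeSet {s(a, b)}).Reachable v a ∨
      (K \ SimpleGraph.fromEdgeSet {s(a, b)}).Reachable v b := by
  rcases auxSideGen w with h | h | h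
  · exact Or.inl h
  · exact Or.inl h
  · exact Or.inr h

lemma auxSplit {K : SimpleGraph V} {a b : V} :
    ∀ {i j : V} (p : K.Walk i j), p.edges.Nodup → s(a, b) ∈ p.edges →
      ((K \ SimpleGraph.fromEdgeSet {s(a, b)}).Reachable i a ∧
       (K \ SimpleGraph.fromEdgeSet {s(a, b)}).Reachable j b) ∨
      ((K \ SimpleGraph.fromEdgeSet {s(a, b)}).Reachable i b ∧
       (K \ SimpleGraph.fromEdgeSet {s(a, b)}).Reachable j a) := by
  intro i j p
  induction p with
  | nil => intro _ hf; simp at hf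
  | @cons u x j h q ih =>
    intro hnd hf
    rw [SimpleGraph.Walk.edges_cons] at hf hnd
    rw [List.nodup_cons] at hnd
    rcases List.mem_cons.mp hf with hf | hf
    · -- head edge is s(a,b); q avoids it
      have hq : ∀ e' ∈ q.edges, e' ∈ (K \ SimpleGraph.fromEdgeSet {s(a, b)}).edgeSet := by
        intro e' he'
        rw [SimpleGraph.edgeSet_sdiff, Set.mem_diff]
        refine ⟨q.edges_subset_edgeSet he', ?_⟩
        rw [SimpleGraph.edgeSet_fromEdgeSet]
        rintro ⟨h1, -⟩
        rw [Set.mem_singleton_iff] at h1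
        rw [h1, hf] at he'
        exact hnd.1 he'
      have hqreach : (K \ SimpleGraph.fromEdgeSet {s(a, b)}).Reachable x j :=
        (q.transfer _ hq).reachable
      rw [Sym2.eq_iff] at hf
      rcases hf with ⟨h1, h2⟩ | ⟨h1, h2⟩
      · subst h1; subst h2
        exact Or.inl ⟨SimpleGraph.Reachable.refl _, hqreach.symm⟩
      · subst h1; subst h2
        exact Or.inr ⟨SimpleGraph.Reachable.refl _, hqreach.symm⟩
    · have hne : s(u, x) ≠ s(a, b) := fun hh => hnd.1 (hh ▸ hf)
      have hadj : (K \ SimpleGraph.fromEdgeSet {s(a, b)}).Adj u x := by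
        rw [SimpleGraph.sdiff_adj]
        exact ⟨h, fun hc => hne ((SimpleGraph.fromEdgeSet_adj _).mp hc).1⟩
      rcases ih hnd.2 hf with ⟨h1, h2⟩ | ⟨h1, h2⟩
      · exact Or.inl ⟨hadj.reachable.trans h1, h2⟩
      · exact Or.inr ⟨hadj.reachable.trans h1, h2⟩

lemma auxEraseEq [DecidableEq V] (T : Finset (Sym2 V)) (f : Sym2 V) :
    SimpleGraph.fromEdgeSet (↑(T.erase f) : Set (Sym2 V)) =
      SimpleGraph.fromEdgeSet (↑T : Set (Sym2 V)) \ SimpleGraph.fromEdgeSet {f} := by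
  ext v w
  simp only [SimpleGraph.fromEdgeSet_adj, Finset.coe_erase, Set.mem_diff,
    SimpleGraph.sdiff_adj, Set.mem_singleton_iff, Finset.mem_coe]
  tauto

end Aux

open SimpleGraph in
lemma auxExchange {V : Type*} [Fintype V] [DecidableEq V] (hV : 2 ≤ Fintype.card V)
    {T : Finset (Sym2 V)} (hST : IsSpanningTree T) {a b i j : V}
    (hab : a ≠ b) (hij : i ≠ j) (hfT : s(a, b) ∈ T) (hgT : s(i, j) ∉ T)
    (hia : (fromEdgeSet (↑T : Set (Sym2 V)) \ fromEdgeSet {s(a, b)}).Reachable i a)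
    (hjb : (fromEdgeSet (↑T : Set (Sym2 V)) \ fromEdgeSet {s(a, b)}).Reachable j b) :
    IsSpanningTree (insert s(i, j) (T.erase s(a, b))) := by
  obtain ⟨hc, hd, hconn, hacy⟩ := hST
  have hgf : s(i, j) ≠ s(a, b) := fun h => hgT (h ▸ hfT)
  have hgE : s(i, j) ∉ T.erase s(a, b) := fun h => hgT (Finset.mem_of_mem_erase h)
  have hK'eq := auxEraseEq T s(a, b)
  have hK'le : fromEdgeSet (↑(T.erase s(a, b)) : Set (Sym2 V)) ≤
      fromEdgeSet (↑T : Set (Sym2 V)) := by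
    apply fromEdgeSet_mono
    exact_mod_cast Finset.erase_subset _ _
  have hK'acyc : (fromEdgeSet (↑(T.erase s(a, b)) : Set (Sym2 V))).IsAcyclic :=
    auxAcyclicMono hK'le hacy
  -- the removed edge is a bridge of the tree
  have hGTadj : (fromEdgeSet (↑T : Set (Sym2 V))).Adj a b :=
    (fromEdgeSet_adj _).2 ⟨by exact_mod_cast hfT, hab⟩
  have hbridge := (isAcyclic_iff_forall_adj_isBridge.mp hacy) hGTadj
  have hnr : ¬ (fromEdgeSet (↑T : Set (Sym2 V)) \ fromEdgeSet {s(a, b)}).Reachable a b :=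
    isBridge_iff.mp hbridge
  have hnotreach : ¬ (fromEdgeSet (↑(T.erase s(a, b)) : Set (Sym2 V))).Reachable i j := by
    rw [hK'eq]
    intro h
    exact hnr ((hia.symm.trans h).trans hjb)
  have hsup : fromEdgeSet (↑(insert s(i, j) (T.erase s(a, b))) : Set (Sym2 V)) =
      fromEdgeSet (↑(T.erase s(a, b)) : Set (Sym2 V)) ⊔ fromEdgeSet {s(i, j)} := by
    rw [Finset.coe_insert, Set.insert_eq, fromEdgeSet_union, sup_comm]
  have hle2 : fromEdgeSet (↑(T.erase s(a, b)) : Set (Sym2 V)) ≤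
      fromEdgeSet (↑(insert s(i, j) (T.erase s(a, b))) : Set (Sym2 V)) := by
    apply fromEdgeSet_mono
    exact_mod_cast Finset.subset_insert _ _
  have hHij : (fromEdgeSet (↑(insert s(i, j) (T.erase s(a, b))) : Set (Sym2 V))).Adj i j :=
    (fromEdgeSet_adj _).2 ⟨by simp, hij⟩
  have hia' := hia; have hjb' := hjb
  rw [← hK'eq] at hia' hjb'
  have hHab : (fromEdgeSet (↑(insert s(i, j) (T.erase s(a, b))) : Set (Sym2 V))).Reachable a b :=
    (((hia'.mono hle2).symm.trans hHij.reachable).trans (hjb'.mono hle2))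
  refine ⟨?_, ?_, ?_, ?_⟩
  · rw [Finset.card_insert_of_notMem hgE, Finset.card_erase_of_mem hfT, hc]
    omega
  · intro e' he'
    rcases Finset.mem_insert.mp he' with h | h
    · subst h; rw [Sym2.mk_isDiag_iff]; exact hij
    · exact hd e' (Finset.mem_of_mem_erase h)
  · -- connectivity
    have hreach2 : ∀ v, (fromEdgeSet (↑(insert s(i, j) (T.erase s(a, b))) : Set (Sym2 V))).Reachable v a ∨
        (fromEdgeSet (↑(insert s(i, j) (T.erase s(a, b))) : Set (Sym2 V))).Reachable v b := by
      intro v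
      rcases auxSide (a := a) (b := b) (hconn v a).some with h | h
      · exact Or.inl ((hK'eq ▸ h : _).mono hle2)
      · exact Or.inr ((hK'eq ▸ h : _).mono hle2)
    have hnea : Nonempty V := hconn.nonempty
    apply SimpleGraph.Connected.mk
    intro v w
    rcases hreach2 v with h1 | h1 <;> rcases hreach2 w with h2 | h2
    · exact h1.trans h2.symm
    · exact (h1.trans hHab).trans h2.symm
    · exact (h1.trans hHab.symm).trans h2.symm
    · exact h1.trans h2.symm
  · rw [hsup]
    exact auxAcyclicSup hK'acyc hij hnotreach


open SimpleGraph in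
lemma auxWeight {V : Type*} [Fintype V] [DecidableEq V] (u : Sym2 V → ℝ) {T : Finset (Sym2 V)}
    (hmax : ∀ T' : Finset (Sym2 V), IsSpanningTree T' → ∑ e ∈ T', u e ≤ ∑ e ∈ T, u e)
    {f g : Sym2 V} (hfT : f ∈ T) (hgT : g ∉ T)
    (hsp : IsSpanningTree (insert g (T.erase f))) : u g ≤ u f := by
  have hsum := hmax _ hsp
  rw [Finset.sum_insert (fun h => hgT (Finset.mem_of_mem_erase h))] at hsum
  have h2 := Finset.add_sum_erase T u hfT
  linarith

noncomputable def auxWalk {V : Type*} {G : SimpleGraph V} {x y : V} (h : G.Reachable x y) :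
    G.Walk x y := Classical.choice h


/-- Proposition 5: let `G` be an acyclic graph on a finite vertex set `V`
with `|V| ≥ 2` and let `u` be a weight assignment on the unordered pairs satisfying strict
separation (edges of `G` have weight `> η`, pairs of disconnected vertices have weight `≤ η`,
for some `η ≥ 0`) and local dominance (along any path of length `m ≥ 2` in `G`, the weight of
the pair of endpoints is smaller than the weight of each edge on the path).  Then for every
maximum-weight spanning tree `T` with respect to `u` we have `I = T ∩ W`, where
`W = {e : u e > η}`. -/
theorem statement5 {V : Type*} [Fintype V] [DecidableEq V] (hV : 2 ≤ Fintype.card V)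
    (G : SimpleGraph V) (hacyc : G.IsAcyclic)
    (u : Sym2 V → ℝ) (η : ℝ) (hη : 0 ≤ η)
    (hsep₁ : ∀ i j : V, G.Adj i j → η < u s(i, j))
    (hsep₂ : ∀ i j : V, i ≠ j → ¬ G.Reachable i j → u s(i, j) ≤ η)
    (hdom : ∀ m : ℕ, 2 ≤ m → ∀ p : Fin (m + 1) → V, Function.Injective p →
      (∀ k : Fin m, G.Adj (p k.castSucc) (p k.succ)) →
      ∀ t : Fin m, u s(p 0, p (Fin.last m)) < u s(p t.castSucc, p t.succ))
    (T : Finset (Sym2 V)) (hT : IsMaxSpanningTree u T) :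
    ∀ e : Sym2 V, e ∈ G.edgeSet ↔ e ∈ T ∧ η < u e := by

  classical
  obtain ⟨hST, hTmax⟩ := hT
  obtain ⟨hTcard, hTdiag, hTconn, hTacyc⟩ := hST
  have hST : IsSpanningTree T := ⟨hTcard, hTdiag, hTconn, hTacyc⟩
  set GT := SimpleGraph.fromEdgeSet (↑T : Set (Sym2 V)) with hGTdef
  have hTedges : ∀ {e' : Sym2 V}, e' ∈ GT.edgeSet → e' ∈ T := by
    intro e' h
    rw [hGTdef, SimpleGraph.edgeSet_fromEdgeSet] at h
    exact_mod_cast h.1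
  intro e
  induction e using Sym2.ind with
  | _ i j =>
  constructor
  · -- forward direction
    intro heG
    have hadj : G.Adj i j := G.mem_edgeSet.mp heG
    have hij : i ≠ j := hadj.ne
    refine ⟨?_, hsep₁ i j hadj⟩
    by_contra heT
    -- the tree path from i to j in T
    obtain ⟨w0⟩ := hTconn.preconnected i j
    set pw : GT.Walk i j := w0.toPath.val with hpwdef
    have hp : pw.IsPath := w0.toPath.prop
    have hplen : 0 < pw.length :=
      Nat.pos_of_ne_zero (fun h0 => hij (SimpleGraph.Walk.eq_of_length_eq_zero h0))
    -- Step 1: each tree-path edge has weight ≥ u s(i,j)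
    have step1 : ∀ s, s < pw.length →
        u s(i, j) ≤ u s(pw.getVert s, pw.getVert (s + 1)) := by
      intro s hs
      have hGTab : GT.Adj (pw.getVert s) (pw.getVert (s + 1)) := pw.adj_getVert_succ hs
      have hab : pw.getVert s ≠ pw.getVert (s + 1) := hGTab.ne
      have hfT : s(pw.getVert s, pw.getVert (s + 1)) ∈ T := hTedges hGTab
      have hfp : s(pw.getVert s, pw.getVert (s + 1)) ∈ pw.edges := auxEdgeMem pw s hs
      rcases auxSplit (K := GT) pw hp.edges_nodup hfp with ⟨h1, h2⟩ | ⟨h1, h2⟩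
      · exact auxWeight u hTmax hfT heT (auxExchange hV hST hab hij hfT heT h1 h2)
      · rw [show s(pw.getVert s, pw.getVert (s + 1)) = s(pw.getVert (s + 1), pw.getVert s)
          from Sym2.eq_swap] at h1 h2 hfT ⊢
        exact auxWeight u hTmax hfT heT (auxExchange hV hST hab.symm hij hfT heT h1 h2)
    -- Step 2: consecutive tree-path vertices are connected in G
    have step2 : ∀ s, s < pw.length →
        G.Reachable (pw.getVert s) (pw.getVert (s + 1)) := by
      intro s hs
      by_contra hn
      have hab : pw.getVert s ≠ pw.getVert (s + 1) := (pw.adj_getVert_succ hs).ne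
      have := hsep₂ _ _ hab hn
      have := hsep₁ i j hadj
      have := step1 s hs
      linarith
    -- Step 3: e is a bridge of G
    have hGnr : ¬ (G \ SimpleGraph.fromEdgeSet {s(i, j)}).Reachable i j :=
      (SimpleGraph.isBridge_iff.mp
        ((SimpleGraph.isAcyclic_iff_forall_adj_isBridge.mp hacyc) hadj))
    -- Step 4: some connecting G-path contains e
    have hexists : ∃ s, ∃ hs : s < pw.length,
        s(i, j) ∈ (auxWalk (step2 s hs)).toPath.val.edges := by
      by_contra hno
      push_neg at hno
      have hreach' : ∀ s, s < pw.length →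
          (G \ SimpleGraph.fromEdgeSet {s(i, j)}).Reachable (pw.getVert s)
            (pw.getVert (s + 1)) := by
        intro s hs
        have hq : ∀ e' ∈ (auxWalk (step2 s hs)).toPath.val.edges,
            e' ∈ (G \ SimpleGraph.fromEdgeSet {s(i, j)}).edgeSet := by
          intro e' he'
          rw [SimpleGraph.edgeSet_sdiff, Set.mem_diff]
          refine ⟨SimpleGraph.Walk.edges_subset_edgeSet _ he', ?_⟩
          rw [SimpleGraph.edgeSet_fromEdgeSet]
          rintro ⟨h1, -⟩
          rw [Set.mem_singleton_iff] at h1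
          exact hno s hs (h1 ▸ he')
        exact (SimpleGraph.Walk.transfer _ _ hq).reachable
      have := auxChain (H := G \ SimpleGraph.fromEdgeSet {s(i, j)})
        (fun n => pw.getVert n) pw.length hreach'
      simp only [SimpleGraph.Walk.getVert_zero, SimpleGraph.Walk.getVert_length] at this
      exact hGnr this
    obtain ⟨s, hs, hmem⟩ := hexists
    set qw : G.Walk (pw.getVert s) (pw.getVert (s + 1)) :=
      (auxWalk (step2 s hs)).toPath.val with hqwdef
    have hqpath : qw.IsPath := (auxWalk (step2 s hs)).toPath.prop
    obtain ⟨t, ht, hte⟩ := auxMemEdge qw hmem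
    by_cases hql : qw.length = 1
    · -- then e itself is the tree-path edge, contradiction with e ∉ T
      have ht0 : t = 0 := by omega
      subst ht0
      have h1 : qw.getVert 1 = pw.getVert (s + 1) :=
        qw.getVert_of_length_le (by omega)
      rw [SimpleGraph.Walk.getVert_zero, h1] at hte
      have hGTab : GT.Adj (pw.getVert s) (pw.getVert (s + 1)) := pw.adj_getVert_succ hs
      exact heT (hte ▸ hTedges hGTab)
    · -- the G-path has length ≥ 2 : local dominance contradicts step1
      have hm : 2 ≤ qw.length := by omega
      have hinj : Function.Injective (fun r : Fin (qw.length + 1) => qw.getVert ↑r) := by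
        intro r1 r2 hr
        exact Fin.ext (auxGetVertInj qw hqpath r1 r2 (Nat.lt_succ_iff.mp r1.isLt)
          (Nat.lt_succ_iff.mp r2.isLt) hr)
      have hadjf : ∀ k : Fin qw.length,
          G.Adj ((fun r : Fin (qw.length + 1) => qw.getVert ↑r) k.castSucc)
            ((fun r : Fin (qw.length + 1) => qw.getVert ↑r) k.succ) := by
        intro k
        simpa [Fin.coe_castSucc, Fin.val_succ] using qw.adj_getVert_succ k.isLt
      have hd := hdom qw.length hm _ hinj hadjf ⟨t, ht⟩
      simp only [Fin.val_zero, Fin.val_last, Fin.coe_castSucc, Fin.val_succ] at hd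
      rw [SimpleGraph.Walk.getVert_zero, SimpleGraph.Walk.getVert_length] at hd
      have := step1 s hs
      rw [hte] at this
      linarith
  · -- reverse direction
    rintro ⟨heT, hue⟩
    have hij : i ≠ j := by
      have := hTdiag _ heT
      rwa [Sym2.mk_isDiag_iff] at this
    have hreach : G.Reachable i j := by
      by_contra hn
      have := hsep₂ i j hij hn
      linarith
    rw [G.mem_edgeSet]
    by_contra hadj
    obtain ⟨w1⟩ := hreach
    set qw : G.Walk i j := w1.toPath.val with hqwdef
    have hqpath : qw.IsPath := w1.toPath.prop
    have hm0 : qw.length ≠ 0 := fun h0 => hij (SimpleGraph.Walk.eq_of_length_eq_zero h0)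
    have hm1 : qw.length ≠ 1 := by
      intro h1
      apply hadj
      have ha := qw.adj_getVert_succ (by omega : 0 < qw.length)
      rw [SimpleGraph.Walk.getVert_zero] at ha
      have : qw.getVert (0 + 1) = j := by
        conv_lhs => rw [show (0 + 1 : ℕ) = qw.length from by omega]
        exact qw.getVert_length
      rwa [this] at ha
    have hm : 2 ≤ qw.length := by omega
    -- e is a bridge of the tree
    have hGTadj : GT.Adj i j := (SimpleGraph.fromEdgeSet_adj _).2 ⟨by exact_mod_cast heT, hij⟩
    have hTnr : ¬ (GT \ SimpleGraph.fromEdgeSet {s(i, j)}).Reachable i j :=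
      (SimpleGraph.isBridge_iff.mp
        ((SimpleGraph.isAcyclic_iff_forall_adj_isBridge.mp hTacyc) hGTadj))
    -- some edge of the G-path crosses the cut
    have hcross : ∃ t, t < qw.length ∧
        ¬ (GT \ SimpleGraph.fromEdgeSet {s(i, j)}).Reachable (qw.getVert t)
          (qw.getVert (t + 1)) := by
      by_contra hno
      push_neg at hno
      have := auxChain (H := GT \ SimpleGraph.fromEdgeSet {s(i, j)})
        (fun n => qw.getVert n) qw.length hno
      simp only [SimpleGraph.Walk.getVert_zero, SimpleGraph.Walk.getVert_length] at this
      exact hTnr this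
    obtain ⟨t, ht, hcr⟩ := hcross
    have hGab : G.Adj (qw.getVert t) (qw.getVert (t + 1)) := qw.adj_getVert_succ ht
    have hab : qw.getVert t ≠ qw.getVert (t + 1) := hGab.ne
    have hgT : s(qw.getVert t, qw.getVert (t + 1)) ∉ T := by
      intro hmem
      apply hcr
      refine SimpleGraph.Adj.reachable ?_
      rw [SimpleGraph.sdiff_adj]
      refine ⟨(SimpleGraph.fromEdgeSet_adj _).2 ⟨by exact_mod_cast hmem, hab⟩, ?_⟩
      intro hcontra
      have h1 := ((SimpleGraph.fromEdgeSet_adj _).mp hcontra).1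
      rw [Set.mem_singleton_iff] at h1
      exact hadj (G.mem_edgeSet.mp (h1 ▸ G.mem_edgeSet.mpr hGab))
    -- sides of the cut
    obtain ⟨wa⟩ := hTconn.preconnected (qw.getVert t) i
    obtain ⟨wb⟩ := hTconn.preconnected (qw.getVert (t + 1)) i
    have hsidea := auxSide (b := j) wa
    have hsideb := auxSide (b := j) wb
    have hweight : u s(qw.getVert t, qw.getVert (t + 1)) ≤ u s(i, j) := by
      rcases hsidea with h1 | h1 <;> rcases hsideb with h2 | h2
      · exact absurd (h1.trans h2.symm) hcr
      · exact auxWeight u hTmax heT hgT (auxExchange hV hST hij hab heT hgT h1 h2)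
      · rw [show s(i, j) = s(j, i) from Sym2.eq_swap] at heT ⊢
        rw [show s(i, j) = s(j, i) from Sym2.eq_swap] at h1 h2
        exact auxWeight u hTmax heT hgT (auxExchange hV hST hij.symm hab heT hgT h1 h2)
      · exact absurd (h1.trans h2.symm) hcr
    -- local dominance gives the opposite strict inequality
    have hinj : Function.Injective (fun r : Fin (qw.length + 1) => qw.getVert ↑r) := by
      intro r1 r2 hr
      exact Fin.ext (auxGetVertInj qw hqpath r1 r2 (Nat.lt_succ_iff.mp r1.isLt)
        (Nat.lt_succ_iff.mp r2.isLt) hr)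
    have hadjf : ∀ k : Fin qw.length,
        G.Adj ((fun r : Fin (qw.length + 1) => qw.getVert ↑r) k.castSucc)
          ((fun r : Fin (qw.length + 1) => qw.getVert ↑r) k.succ) := by
      intro k
      simpa [Fin.coe_castSucc, Fin.val_succ] using qw.adj_getVert_succ k.isLt
    have hd := hdom qw.length hm _ hinj hadjf ⟨t, ht⟩
    simp only [Fin.val_zero, Fin.val_last, Fin.coe_castSucc, Fin.val_succ] at hd
    rw [SimpleGraph.Walk.getVert_zero, SimpleGraph.Walk.getVert_length] at hd
    linarith
end

section
/- Assume the interaction graph G = (V, I) is acyclic, and let T be a maximum-weight spanning tree of the complete graph on V with respect to the weight assignment w. Then for any two distinct i, j ∈ V, we have {i,j} ∈ I if and only if {i,j} ∈ T and w_{{i,j}} > 0. -/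
open Finset

-- real basics
lemma tanh_strictMono : StrictMono Real.tanh := by
  intro a b hab
  have h1 : Real.tanh b - Real.tanh a = Real.sinh (b - a) / (Real.cosh b * Real.cosh a) := by
    rw [Real.tanh_eq_sinh_div_cosh, Real.tanh_eq_sinh_div_cosh,
      div_sub_div _ _ (Real.cosh_pos b).ne' (Real.cosh_pos a).ne', Real.sinh_sub]
  have h2 : 0 < Real.sinh (b - a) / (Real.cosh b * Real.cosh a) :=
    div_pos (Real.sinh_pos_iff.mpr (sub_pos.mpr hab)) (mul_pos (Real.cosh_pos b) (Real.cosh_pos a))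
  linarith

lemma two_sigmoid_sub_one (t : ℝ) : 2 * sigmoid t - 1 = Real.tanh (t / 2) := by
  have he : Real.exp t = Real.exp (t / 2) * Real.exp (t / 2) := by
    rw [← Real.exp_add]; ring_nf
  have h2 : (0:ℝ) < Real.exp (t / 2) := Real.exp_pos _
  have h3 : (0:ℝ) < 1 + Real.exp t := by positivity
  rw [sigmoid, Real.tanh_eq_sinh_div_cosh, Real.sinh_eq, Real.cosh_eq, Real.exp_neg, he]
  have h4 : Real.exp (t/2) * Real.exp (t/2) + 1 > 0 := by positivity
  field_simp
  ring

-- pm basics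
@[simp] lemma pm_true : pm true = 1 := rfl
@[simp] lemma pm_false : pm false = -1 := rfl
@[simp] lemma pm_sq (b : Bool) : pm b * pm b = 1 := by cases b <;> norm_num [pm]
lemma pm_cases (b : Bool) : pm b = 1 ∨ pm b = -1 := by cases b <;> simp

-- flips
def flipX {d : ℕ} (g : Fin d → Bool) (x : Fin d → Bool) : Fin d → Bool := fun v => xor (g v) (x v)

lemma flipX_invol {d : ℕ} (g : Fin d → Bool) (x : Fin d → Bool) : flipX g (flipX g x) = x := by
  funext v; cases g v <;> simp [flipX]

lemma sum_flipX {d : ℕ} (g : Fin d → Bool) (F : (Fin d → Bool) → ℝ) :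
    ∑ x : Fin d → Bool, F x = ∑ x : Fin d → Bool, F (flipX g x) :=
  (Fintype.sum_bijective (flipX g) (Function.Involutive.bijective (flipX_invol g))
    _ _ (fun _ => rfl)).symm

def flipB {d : ℕ} (g : Fin d → Bool) (β : Fin d → Fin d → ℝ) : Fin d → Fin d → ℝ :=
  fun i j => if g i = g j then β i j else -β i j

lemma pm_flipX {d : ℕ} (g : Fin d → Bool) (x : Fin d → Bool) (v : Fin d) :
    pm (flipX g x v) = (if g v then (-1:ℝ) else 1) * pm (x v) := by
  cases hg : g v <;> cases hx : x v <;> simp [flipX, pm, hg, hx]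

lemma fld_flipX {d : ℕ} (g : Fin d → Bool) (β : Fin d → Fin d → ℝ) (x : Fin d → Bool) :
    fld d β (flipX g x) = fld d (flipB g β) x := by
  unfold fld
  refine Finset.sum_congr rfl (fun i _ => Finset.sum_congr rfl (fun j _ => ?_))
  rw [pm_flipX, pm_flipX]
  unfold flipB
  cases hgi : g i <;> cases hgj : g j <;> simp [hgi, hgj] <;> try ring

lemma sum_tanh_flip {d : ℕ} (g : Fin d → Bool) (β : Fin d → Fin d → ℝ)
    (h : (Fin d → Bool) → ℝ) :
    ∑ x : Fin d → Bool, Real.tanh (fld d β x / 2) * h x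
      = ∑ x : Fin d → Bool, Real.tanh (fld d (flipB g β) x / 2) * h (flipX g x) := by
  rw [sum_flipX g (fun x => Real.tanh (fld d β x / 2) * h x)]
  exact Finset.sum_congr rfl (fun x _ => by rw [fld_flipX])

-- Mq and zero sums
noncomputable def Mq {d : ℕ} (β : Fin d → Fin d → ℝ) (p q : Fin d) : ℝ :=
  ∑ x : Fin d → Bool, Real.tanh (fld d β x / 2) * (pm (x p) * pm (x q))

lemma eq_zero_of_eq_neg {s : ℝ} (h : s = -s) : s = 0 := by linarith

lemma sum_eq_zero_of_flip_neg {d : ℕ} (g : Fin d → Bool) (f : (Fin d → Bool) → ℝ)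
    (h : ∀ x, f (flipX g x) = - f x) : ∑ x : Fin d → Bool, f x = 0 := by
  apply eq_zero_of_eq_neg
  calc ∑ x : Fin d → Bool, f x = ∑ x : Fin d → Bool, f (flipX g x) := sum_flipX g f
  _ = ∑ x : Fin d → Bool, -(f x) := Finset.sum_congr rfl (fun x _ => h x)
  _ = -∑ x : Fin d → Bool, f x := by rw [Finset.sum_neg_distrib]

lemma sum_pm_zero {d : ℕ} (p : Fin d) : ∑ x : Fin d → Bool, pm (x p) = 0 := by
  refine sum_eq_zero_of_flip_neg (fun v => decide (v = p)) _ (fun x => ?_)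
  rw [pm_flipX]; simp

lemma sum_pm_pm_zero {d : ℕ} (p q : Fin d) (hpq : p ≠ q) :
    ∑ x : Fin d → Bool, pm (x p) * pm (x q) = 0 := by
  refine sum_eq_zero_of_flip_neg (fun v => decide (v = p)) _ (fun x => ?_)
  rw [pm_flipX, pm_flipX]
  simp [hpq.symm]

lemma flipB_const_true {d : ℕ} (β : Fin d → Fin d → ℝ) :
    flipB (fun _ => true) β = β := by
  funext i j; simp [flipB]

lemma sum_tanh_pm_zero {d : ℕ} (β : Fin d → Fin d → ℝ) (p : Fin d) :
    ∑ x : Fin d → Bool, Real.tanh (fld d β x / 2) * pm (x p) = 0 := by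
  refine sum_eq_zero_of_flip_neg (fun _ => true) _ (fun x => ?_)
  rw [fld_flipX, flipB_const_true, pm_flipX]; simp

-- graph utilities
section Graphs
open SimpleGraph

variable {V : Type*}

lemma acyclic_mono {G₁ G₂ : SimpleGraph V} (h : G₁ ≤ G₂) (h2 : G₂.IsAcyclic) : G₁.IsAcyclic := by
  intro v c hc
  exact h2 (c.mapLe h) (hc.mapLe h)

lemma exists_cut (G' : SimpleGraph V) (hac : G'.IsAcyclic) {a b : V} (hab : G'.Adj a b) :
    ∃ g : V → Bool, g a ≠ g b ∧
      ∀ u v : V, G'.Adj u v → (s(u, v) = s(a, b) ∨ g u = g v) := by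
  classical
  set K := G' \ SimpleGraph.fromEdgeSet {s(a, b)} with hK
  have hbr : ¬ K.Reachable a b := by
    have h1 : G'.IsBridge s(a, b) :=
      (SimpleGraph.isAcyclic_iff_forall_edge_isBridge.mp hac) ((SimpleGraph.mem_edgeSet (G := G')).mpr hab)
    exact SimpleGraph.isBridge_iff.mp h1
  refine ⟨fun v => decide (K.Reachable a v), ?_, ?_⟩
  · simp only [ne_eq, decide_eq_decide]
    intro hiff
    exact hbr (hiff.mp (SimpleGraph.Reachable.refl a))
  · intro u v huv
    by_cases he : s(u, v) = s(a, b)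
    · exact Or.inl he
    · right
      have hKadj : K.Adj u v := by
        rw [hK, SimpleGraph.sdiff_adj]
        refine ⟨huv, ?_⟩
        rw [SimpleGraph.fromEdgeSet_adj]
        rintro ⟨h1, -⟩
        exact he (by simpa using h1)
      have : K.Reachable a u ↔ K.Reachable a v :=
        ⟨fun r => r.trans hKadj.reachable, fun r => r.trans hKadj.symm.reachable⟩
      simpa [decide_eq_decide] using this

lemma walk_parity [DecidableEq V] (G' : SimpleGraph V) (k : V → Bool) (e0 : Sym2 V)
    (hsame : ∀ u v : V, G'.Adj u v → s(u, v) ≠ e0 → k u = k v)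
    (hdiff : ∀ u v : V, G'.Adj u v → s(u, v) = e0 → k u ≠ k v) :
    ∀ {u v : V} (W : G'.Walk u v), (k u = k v) ↔ Even (W.edges.count e0) := by
  intro u v W
  induction W with
  | nil => simp
  | @cons u w v h W ih =>
    rw [SimpleGraph.Walk.edges_cons, List.count_cons]
    by_cases he : s(u, w) = e0
    · have hne : k u ≠ k w := hdiff _ _ h he
      rw [if_pos (by simp [he] : (s(u,w) == e0) = true), Nat.even_add_one, ← ih]
      cases hku : k u <;> cases hkw : k w <;> cases hkv : k v <;> simp_all
    · have heq : k u = k w := hsame _ _ h he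
      rw [if_neg (by simp [he] : ¬ (s(u,w) == e0) = true), heq, ih, Nat.add_zero]

lemma walk_surgery (G' K : SimpleGraph V) (p q : V)
    (h : ∀ a b : V, G'.Adj a b → s(a, b) ≠ s(p, q) → K.Adj a b) :
    ∀ {u v : V} (_ : G'.Walk u v),
      K.Reachable u v ∨ (K.Reachable u p ∧ K.Reachable q v) ∨
        (K.Reachable u q ∧ K.Reachable p v) := by
  intro u v W
  induction W with
  | nil => exact Or.inl (SimpleGraph.Reachable.refl _)
  | @cons u w v hadj W ih =>
    by_cases he : s(u, w) = s(p, q)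
    · rcases Sym2.eq_iff.mp he with ⟨rfl, rfl⟩ | ⟨rfl, rfl⟩
      · -- u = p, w = q
        rcases ih with h1 | ⟨h2a, h2b⟩ | ⟨h3a, h3b⟩
        · exact Or.inr (Or.inl ⟨SimpleGraph.Reachable.refl _, h1⟩)
        · exact Or.inl (h2a.symm.trans h2b)
        · exact Or.inl h3b
      · -- u = q, w = p
        rcases ih with h1 | ⟨h2a, h2b⟩ | ⟨h3a, h3b⟩
        · exact Or.inr (Or.inr ⟨SimpleGraph.Reachable.refl _, h1⟩)
        · exact Or.inl h2b
        · exact Or.inl (h3a.symm.trans h3b)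
    · have hk := (h _ _ hadj he).reachable
      rcases ih with h1 | ⟨h2a, h2b⟩ | ⟨h3a, h3b⟩
      · exact Or.inl (hk.trans h1)
      · exact Or.inr (Or.inl ⟨hk.trans h2a, h2b⟩)
      · exact Or.inr (Or.inr ⟨hk.trans h3a, h3b⟩)

end Graphs

-- Z4 : sum of tanh over the cube vanishes for acyclic interaction graphs
noncomputable def St (d : ℕ) (β : Fin d → Fin d → ℝ) : ℝ :=
  ∑ x : Fin d → Bool, Real.tanh (fld d β x / 2)

def negOn {d : ℕ} (s : Finset (Sym2 (Fin d))) (β : Fin d → Fin d → ℝ) : Fin d → Fin d → ℝ :=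
  fun i j => if s(i, j) ∈ s then -β i j else β i j

lemma St_flip {d : ℕ} (g : Fin d → Bool) (β : Fin d → Fin d → ℝ) :
    St d (flipB g β) = St d β := by
  have h1 := sum_tanh_flip g β (fun _ => (1:ℝ))
  simp only [mul_one] at h1
  exact h1.symm

lemma St_negOn_step {d : ℕ} (β : Fin d → Fin d → ℝ)
    (hacyc : (interGraph d β).IsAcyclic) (s : Finset (Sym2 (Fin d))) (e : Sym2 (Fin d)) :
    e ∈ (interGraph d β).edgeSet → e ∉ s →
      St d (negOn (insert e s) β) = St d (negOn s β) := by
  induction e using Sym2.ind with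
  | _ a b =>
    intro he hens
    have hadj : (interGraph d β).Adj a b := (SimpleGraph.mem_edgeSet (G := interGraph d β)).mp he
    obtain ⟨g, hgab, hcut⟩ := exists_cut _ hacyc hadj
    have hge : ∀ u v : Fin d, s(u, v) = s(a, b) → g u ≠ g v := by
      intro u v huv
      rcases Sym2.eq_iff.mp huv with ⟨rfl, rfl⟩ | ⟨rfl, rfl⟩
      · exact hgab
      · exact Ne.symm hgab
    have hentry : ∀ i j : Fin d, i ≠ j →
        negOn (insert s(a, b) s) β i j = flipB g (negOn s β) i j := by
      intro i j hij
      by_cases hb : β i j = 0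
      · simp only [negOn, flipB, hb]
        split_ifs <;> simp
      · have hadj' : (interGraph d β).Adj i j := by
          rw [interGraph, SimpleGraph.fromRel_adj]
          exact ⟨hij, Or.inl hb⟩
        rcases hcut i j hadj' with he' | hsame
        · have hgij := hge i j he'
          have hnotin : s(i, j) ∉ s := by rw [he']; exact hens
          simp only [negOn, flipB, Finset.mem_insert]
          rw [if_pos (Or.inl he'), if_neg hgij, if_neg hnotin]
        · have hne : s(i, j) ≠ s(a, b) := fun hh => (hge i j hh) hsame
          simp only [negOn, flipB, Finset.mem_insert]
          rw [if_pos hsame]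
          by_cases hmem : s(i, j) ∈ s
          · rw [if_pos (Or.inr hmem), if_pos hmem]
          · rw [if_neg (by tauto), if_neg hmem]
    have hfld : ∀ x, fld d (negOn (insert s(a, b) s) β) x = fld d (flipB g (negOn s β)) x := by
      intro x
      unfold fld
      refine Finset.sum_congr rfl (fun i _ => Finset.sum_congr rfl (fun j hj => ?_))
      rw [hentry i j (Finset.mem_Ioi.mp hj).ne'.symm]
    calc St d (negOn (insert s(a, b) s) β)
        = St d (flipB g (negOn s β)) := by
          unfold St; exact Finset.sum_congr rfl (fun x _ => by rw [hfld x])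
      _ = St d (negOn s β) := St_flip g (negOn s β)

lemma St_zero {d : ℕ} (β : Fin d → Fin d → ℝ)
    (hacyc : (interGraph d β).IsAcyclic) : St d β = 0 := by
  classical
  have key : ∀ s : Finset (Sym2 (Fin d)), (∀ e ∈ s, e ∈ (interGraph d β).edgeSet) →
      St d (negOn s β) = St d β := by
    intro s
    induction s using Finset.induction_on with
    | empty =>
      intro _
      have : negOn (∅ : Finset (Sym2 (Fin d))) β = β := by
        funext i j; simp [negOn]
      rw [this]
    | @insert e s hens ih =>
      intro hsub
      rw [St_negOn_step β hacyc s e (hsub e (Finset.mem_insert_self e s)) hens]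
      exact ih (fun e' he' => hsub e' (Finset.mem_insert_of_mem he'))
  have h2 := key (interGraph d β).edgeFinset
    (fun e he => (SimpleGraph.mem_edgeFinset).mp he)
  have h3 : ∀ x, fld d (negOn (interGraph d β).edgeFinset β) x = - fld d β x := by
    intro x
    unfold fld
    rw [← Finset.sum_neg_distrib]
    refine Finset.sum_congr rfl (fun i _ => ?_)
    rw [← Finset.sum_neg_distrib]
    refine Finset.sum_congr rfl (fun j hj => ?_)
    have hij : i ≠ j := (Finset.mem_Ioi.mp hj).ne'.symm
    by_cases hb : β i j = 0
    · simp [negOn, hb]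
    · have hadj : (interGraph d β).Adj i j := by
        rw [interGraph, SimpleGraph.fromRel_adj]
        exact ⟨hij, Or.inl hb⟩
      have hmem : s(i, j) ∈ (interGraph d β).edgeFinset :=
        (SimpleGraph.mem_edgeFinset).mpr ((SimpleGraph.mem_edgeSet _).mpr hadj)
      simp [negOn, hmem]
  apply eq_zero_of_eq_neg
  calc St d β = St d (negOn (interGraph d β).edgeFinset β) := h2.symm
    _ = ∑ x : Fin d → Bool, Real.tanh (-(fld d β x) / 2) := by
        unfold St
        exact Finset.sum_congr rfl (fun x _ => by rw [h3 x])
    _ = - St d β := by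
        unfold St
        rw [← Finset.sum_neg_distrib]
        refine Finset.sum_congr rfl (fun x _ => ?_)
        rw [neg_div, Real.tanh_neg]

open scoped Classical in
lemma wgt_eq {d : ℕ} (β : Fin d → Fin d → ℝ) (hacyc : (interGraph d β).IsAcyclic)
    (p q : Fin d) (hpq : p ≠ q) :
    wgt d β s(p, q) = |Mq β p q| / 2 ^ d := by
  have hz4 : St d β = 0 := St_zero β hacyc
  set A : Finset (Fin d → Bool) :=
    Finset.univ.filter (fun x => ∀ v ∈ s(p, q), x v = true) with hA
  have hmemiff : ∀ x : Fin d → Bool,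
      (∀ v ∈ s(p, q), x v = true) ↔ (x p = true ∧ x q = true) := by
    intro x
    constructor
    · intro h
      exact ⟨h p (Sym2.mem_mk_left p q), h q (Sym2.mem_mk_right p q)⟩
    · rintro ⟨h1, h2⟩ v hv
      rcases Sym2.mem_iff.mp hv with rfl | rfl
      · exact h1
      · exact h2
  have key : ∀ h : (Fin d → Bool) → ℝ, ∑ x ∈ A, h x =
      (∑ x : Fin d → Bool, h x + ∑ x : Fin d → Bool, h x * pm (x p)
        + ∑ x : Fin d → Bool, h x * pm (x q)
        + ∑ x : Fin d → Bool, h x * (pm (x p) * pm (x q))) / 4 := by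
    intro h
    rw [hA, Finset.sum_filter, ← Finset.sum_add_distrib, ← Finset.sum_add_distrib,
      ← Finset.sum_add_distrib, Finset.sum_div]
    refine Finset.sum_congr rfl (fun x _ => ?_)
    rcases hxp : x p <;> rcases hxq : x q <;>
      simp [hmemiff x, hxp, hxq, pm] <;> ring
  have hcard : ((A.card : ℝ)) = 2 ^ d / 4 := by
    have h1 : ((A.card : ℝ)) = ∑ x ∈ A, (1 : ℝ) := by
      rw [Finset.sum_const, nsmul_eq_mul, mul_one]
    rw [h1, key]
    simp only [one_mul]
    rw [sum_pm_zero, sum_pm_zero, sum_pm_pm_zero p q hpq]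
    have h2 : ∑ _x : Fin d → Bool, (1 : ℝ) = 2 ^ d := by
      rw [Finset.sum_const, nsmul_eq_mul, mul_one, Finset.card_univ]
      simp [Fintype.card_fun]
    rw [h2]; ring
  have hnum : ∑ x ∈ A, (2 * sigmoid (1 * fld d β x) - 1) = Mq β p q / 4 := by
    rw [key]
    have ht : ∀ x : Fin d → Bool,
        2 * sigmoid (1 * fld d β x) - 1 = Real.tanh (fld d β x / 2) := fun x => by
      rw [one_mul]; exact two_sigmoid_sub_one _
    simp only [ht]
    rw [show ∑ x : Fin d → Bool, Real.tanh (fld d β x / 2) = St d β from rfl, hz4,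
      sum_tanh_pm_zero, sum_tanh_pm_zero]
    show (0 + 0 + 0 + Mq β p q) / 4 = _
    ring
  have e2 : ∑ x ∈ A, (2 * sigmoid (1 * fld d β x) - 1)
      = 2 * (∑ x ∈ A, sigmoid (1 * fld d β x)) - (A.card : ℝ) := by
    rw [Finset.sum_sub_distrib, ← Finset.mul_sum, Finset.sum_const, nsmul_eq_mul, mul_one]
  have hMq : 2 * (∑ x ∈ A, sigmoid (1 * fld d β x)) - (A.card : ℝ) = Mq β p q / 4 := by
    rw [← e2, hnum]
  have h2d : (0:ℝ) < 2 ^ d := by positivity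
  have hfin : 2 * condProbY d β 1 A - 1 = Mq β p q / 2 ^ d := by
    rw [condProbY, hcard] at *
    field_simp
    field_simp at hMq
    linarith [hMq]
  rw [wgt, ← hA, hfin, abs_div, abs_of_pos h2d]

-- core analytic lemmas
lemma sum_pair' {d : ℕ} (c : ℝ) (a b : Fin d) (hab : a < b) (F : Fin d → Fin d → ℝ)
    (hF : ∀ i j : Fin d, i < j → F i j = if s(i, j) = s(a, b) then c else 0) :
    ∑ i : Fin d, ∑ j ∈ Finset.Ioi i, F i j = c := by
  rw [Finset.sum_eq_single a]
  · rw [Finset.sum_eq_single b]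
    · rw [hF a b hab, if_pos rfl]
    · intro j hj hjb
      rw [hF a j (Finset.mem_Ioi.mp hj), if_neg]
      intro hh
      rcases Sym2.eq_iff.mp hh with ⟨-, h2⟩ | ⟨h1, -⟩
      · exact hjb h2
      · exact hab.ne h1
    · intro hb'; exact absurd (Finset.mem_Ioi.mpr hab) hb'
  · intro i _ hia
    apply Finset.sum_eq_zero
    intro j hj
    rw [hF i j (Finset.mem_Ioi.mp hj), if_neg]
    intro hh
    rcases Sym2.eq_iff.mp hh with ⟨h1, -⟩ | ⟨h1, h2⟩
    · exact hia h1
    · have hlt := Finset.mem_Ioi.mp hj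
      rw [h1, h2] at hlt
      exact absurd hlt hab.asymm
  · intro ha'; exact absurd (Finset.mem_univ a) ha'

lemma sum_pair {d : ℕ} (c : ℝ) (a b : Fin d) (hab : a ≠ b) (F : Fin d → Fin d → ℝ)
    (hF : ∀ i j : Fin d, i < j → F i j = if s(i, j) = s(a, b) then c else 0) :
    ∑ i : Fin d, ∑ j ∈ Finset.Ioi i, F i j = c := by
  rcases hab.lt_or_gt with h | h
  · exact sum_pair' c a b h F hF
  · refine sum_pair' c b a h F (fun i j hij => ?_)
    rw [hF i j hij, show s(a, b) = s(b, a) from Sym2.eq_swap]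

lemma fld_flipB_eq {d : ℕ} (β : Fin d → Fin d → ℝ) (hsymm : ∀ i j, β i j = β j i)
    (g : Fin d → Bool) (a b : Fin d) (hab : a ≠ b) (hgab : g a ≠ g b)
    (hcut : ∀ u v : Fin d, β u v ≠ 0 → u ≠ v → (s(u, v) = s(a, b) ∨ g u = g v))
    (x : Fin d → Bool) :
    fld d (flipB g β) x = fld d β x - 2 * (β a b * pm (x a) * pm (x b)) := by
  have hdiff : ∑ i : Fin d, ∑ j ∈ Finset.Ioi i,
      (β i j * pm (x i) * pm (x j) - flipB g β i j * pm (x i) * pm (x j))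
        = 2 * (β a b * pm (x a) * pm (x b)) := by
    apply sum_pair _ a b hab
    intro i j hij
    by_cases hb : β i j = 0
    · by_cases he : s(i, j) = s(a, b)
      · rw [if_pos he]
        have hzero : β a b = 0 := by
          rcases Sym2.eq_iff.mp he with ⟨rfl, rfl⟩ | ⟨rfl, rfl⟩
          · exact hb
          · rw [hsymm]; exact hb
        rw [hzero]
        simp only [flipB, hb]
        split_ifs <;> ring
      · rw [if_neg he]
        simp only [flipB, hb]
        split_ifs <;> ring
    · rcases hcut i j hb hij.ne with he | hsame
      · rw [if_pos he]
        have hgij : g i ≠ g j := by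
          rcases Sym2.eq_iff.mp he with ⟨rfl, rfl⟩ | ⟨rfl, rfl⟩
          · exact hgab
          · exact Ne.symm hgab
        have hc : β a b * pm (x a) * pm (x b) = β i j * pm (x i) * pm (x j) := by
          rcases Sym2.eq_iff.mp he with ⟨rfl, rfl⟩ | ⟨rfl, rfl⟩
          · rfl
          · rw [hsymm]; ring
        rw [hc]
        simp only [flipB]
        rw [if_neg hgij]
        ring
      · have hne : s(i, j) ≠ s(a, b) := by
          intro he
          rcases Sym2.eq_iff.mp he with ⟨rfl, rfl⟩ | ⟨rfl, rfl⟩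
          · exact hgab hsame
          · exact hgab hsame.symm
        rw [if_neg hne]
        simp only [flipB]
        rw [if_pos hsame]
        ring
  have hsub : fld d β x - fld d (flipB g β) x = 2 * (β a b * pm (x a) * pm (x b)) := by
    rw [fld, fld, ← Finset.sum_sub_distrib, ← hdiff]
    exact Finset.sum_congr rfl (fun i _ => (Finset.sum_sub_distrib _ _).symm)
  linarith

lemma Mq_flipB_neg {d : ℕ} (β : Fin d → Fin d → ℝ) (g : Fin d → Bool) (p q : Fin d)
    (hg : g p ≠ g q) : Mq (flipB g β) p q = - Mq β p q := by
  have h1 := sum_tanh_flip g β (fun x => pm (x p) * pm (x q))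
  have h2 : ∀ x : Fin d → Bool,
      Real.tanh (fld d (flipB g β) x / 2) * (pm (flipX g x p) * pm (flipX g x q))
        = - (Real.tanh (fld d (flipB g β) x / 2) * (pm (x p) * pm (x q))) := by
    intro x
    rw [pm_flipX, pm_flipX]
    rcases hgp : g p <;> rcases hgq : g q <;> simp_all <;> ring
  have h3 : Mq β p q = - Mq (flipB g β) p q := by
    rw [Mq, Mq, ← Finset.sum_neg_distrib]
    rw [show (∑ x : Fin d → Bool, Real.tanh (fld d β x / 2) * (pm (x p) * pm (x q))) =
      ∑ x : Fin d → Bool,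
        Real.tanh (fld d (flipB g β) x / 2) * (pm (flipX g x p) * pm (flipX g x q)) from h1]
    exact Finset.sum_congr rfl (fun x _ => h2 x)
  linarith

lemma Mq_as_D {d : ℕ} (β : Fin d → Fin d → ℝ) (g : Fin d → Bool) (p q : Fin d)
    (hg : g p ≠ g q) :
    Mq β p q = ∑ x : Fin d → Bool,
      ((Real.tanh (fld d β x / 2) - Real.tanh (fld d (flipB g β) x / 2)) / 2)
        * (pm (x p) * pm (x q)) := by
  have hneg := Mq_flipB_neg β g p q hg
  have h : ∑ x : Fin d → Bool,
      ((Real.tanh (fld d β x / 2) - Real.tanh (fld d (flipB g β) x / 2)) / 2)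
        * (pm (x p) * pm (x q)) = (Mq β p q - Mq (flipB g β) p q) / 2 := by
    rw [Mq, Mq, ← Finset.sum_sub_distrib, Finset.sum_div]
    exact Finset.sum_congr rfl (fun x _ => by ring)
  rw [h, hneg]
  ring

lemma abs_sum_lt {d : ℕ} (f h : (Fin d → Bool) → ℝ) (hf : ∀ x, 0 < f x)
    (hh : ∀ x, h x = f x ∨ h x = - f x) (x0 x1 : Fin d → Bool)
    (h0 : h x0 = f x0) (h1 : h x1 = - f x1) :
    |∑ x : Fin d → Bool, h x| < ∑ x : Fin d → Bool, f x := by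
  rw [abs_lt]
  constructor
  · have key : 0 < ∑ x : Fin d → Bool, (h x + f x) := by
      have hx0 : 0 < h x0 + f x0 := by rw [h0]; linarith [hf x0]
      have := Finset.single_le_sum (f := fun x => h x + f x)
        (fun x _ => by rcases hh x with hx | hx <;> rw [hx] <;> linarith [hf x])
        (Finset.mem_univ x0)
      linarith
    rw [Finset.sum_add_distrib] at key
    linarith
  · have key : 0 < ∑ x : Fin d → Bool, (f x - h x) := by
      have hx1 : 0 < f x1 - h x1 := by rw [h1]; linarith [hf x1]
      have := Finset.single_le_sum (f := fun x => f x - h x)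
        (fun x _ => by rcases hh x with hx | hx <;> rw [hx] <;> linarith [hf x])
        (Finset.mem_univ x1)
      linarith
    rw [Finset.sum_sub_distrib] at key
    linarith

lemma chi_neg_exists {d : ℕ} (p q a b : Fin d) (hpq : p ≠ q) (hne : s(p, q) ≠ s(a, b)) :
    ∃ x : Fin d → Bool, (pm (x p) * pm (x q)) * (pm (x a) * pm (x b)) = -1 := by
  have hval : ∀ (w : Fin d) (v : Fin d), v ≠ w → pm (decide (v ≠ w)) = 1 := by
    intro w v hv; simp [pm, hv]
  have hval2 : ∀ w : Fin d, pm (decide (w ≠ w)) = -1 := by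
    intro w; simp [pm]
  by_cases hpa : p = a ∨ p = b
  · rcases hpa with rfl | rfl
    · -- p = a
      have hqb : q ≠ b := by rintro rfl; exact hne rfl
      refine ⟨fun v => decide (v ≠ q), ?_⟩
      rw [hval q p hpq, hval2 q, hval q b (Ne.symm hqb)]
      ring
    · -- p = b
      have hqa : q ≠ a := by rintro rfl; exact hne Sym2.eq_swap
      refine ⟨fun v => decide (v ≠ q), ?_⟩
      rw [hval q p hpq, hval2 q, hval q a (Ne.symm hqa)]
      ring
  · push_neg at hpa
    refine ⟨fun v => decide (v ≠ p), ?_⟩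
    rw [hval2 p, hval p q (Ne.symm hpq), hval p a (Ne.symm hpa.1), hval p b (Ne.symm hpa.2)]
    ring

lemma DF_pos (u c e : ℝ) (he : e = 1 ∨ e = -1) (hc : 0 < c) :
    0 < (Real.tanh (u / 2) - Real.tanh ((u - 2 * (c * e)) / 2)) / 2 * e := by
  rcases he with rfl | rfl
  · have := tanh_strictMono (show (u - 2 * (c * 1)) / 2 < u / 2 by linarith)
    linarith
  · have := tanh_strictMono (show u / 2 < (u - 2 * (c * (-1))) / 2 by linarith)
    linarith

lemma DF_neg (u c e : ℝ) (he : e = 1 ∨ e = -1) (hc : c < 0) :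
    (Real.tanh (u / 2) - Real.tanh ((u - 2 * (c * e)) / 2)) / 2 * e < 0 := by
  rcases he with rfl | rfl
  · have := tanh_strictMono (show u / 2 < (u - 2 * (c * 1)) / 2 by linarith)
    linarith
  · have := tanh_strictMono (show (u - 2 * (c * (-1))) / 2 < u / 2 by linarith)
    linarith

open scoped Classical in
lemma main_compare {d : ℕ} (β : Fin d → Fin d → ℝ) (hsymm : ∀ i j, β i j = β j i)
    (hacyc : (interGraph d β).IsAcyclic) {a b : Fin d} (hab : a ≠ b) (hba : β a b ≠ 0)
    (g : Fin d → Bool) (hgab : g a ≠ g b)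
    (hcut : ∀ u v : Fin d, β u v ≠ 0 → u ≠ v → (s(u, v) = s(a, b) ∨ g u = g v)) :
    0 < wgt d β s(a, b) ∧
      ∀ p q : Fin d, p ≠ q → g p ≠ g q → s(p, q) ≠ s(a, b) →
        wgt d β s(p, q) < wgt d β s(a, b) := by
  have harg : ∀ x : Fin d → Bool,
      fld d (flipB g β) x = fld d β x - 2 * (β a b * (pm (x a) * pm (x b))) := by
    intro x
    rw [fld_flipB_eq β hsymm g a b hab hgab hcut x]
    ring
  set D : (Fin d → Bool) → ℝ := fun x =>
    (Real.tanh (fld d β x / 2) - Real.tanh (fld d (flipB g β) x / 2)) / 2 with hD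
  set F : (Fin d → Bool) → ℝ := fun x => D x * (pm (x a) * pm (x b)) with hF
  have hecases : ∀ x : Fin d → Bool,
      pm (x a) * pm (x b) = 1 ∨ pm (x a) * pm (x b) = -1 := by
    intro x
    rcases pm_cases (x a) with h1 | h1 <;> rcases pm_cases (x b) with h2 | h2 <;>
      rw [h1, h2] <;> norm_num
  have hFpos : 0 < β a b → ∀ x, 0 < F x := by
    intro hcp x
    rw [hF]
    dsimp only
    rw [hD]
    dsimp only
    rw [harg x]
    exact DF_pos _ _ _ (hecases x) hcp
  have hFneg : β a b < 0 → ∀ x, F x < 0 := by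
    intro hcn x
    rw [hF]
    dsimp only
    rw [hD]
    dsimp only
    rw [harg x]
    exact DF_neg _ _ _ (hecases x) hcn
  have hMab : Mq β a b = ∑ x : Fin d → Bool, F x := by
    rw [Mq_as_D β g a b hgab]
  have hneuniv : (Finset.univ : Finset (Fin d → Bool)).Nonempty :=
    ⟨fun _ => true, Finset.mem_univ _⟩
  have h2d : (0:ℝ) < 2 ^ d := by positivity
  have habspos : 0 < |Mq β a b| := by
    rcases hba.lt_or_gt with hneg | hpos
    · have hlt : Mq β a b < 0 := by
        rw [hMab]; exact Finset.sum_neg (fun x _ => hFneg hneg x) hneuniv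
      exact abs_pos.mpr hlt.ne
    · have hlt : 0 < Mq β a b := by
        rw [hMab]; exact Finset.sum_pos (fun x _ => hFpos hpos x) hneuniv
      exact abs_pos.mpr hlt.ne'
  constructor
  · rw [wgt_eq β hacyc a b hab]
    exact div_pos habspos h2d
  · intro p q hpq hgpq hnepq
    rw [wgt_eq β hacyc p q hpq, wgt_eq β hacyc a b hab]
    have hMpq : Mq β p q = ∑ x : Fin d → Bool,
        F x * ((pm (x p) * pm (x q)) * (pm (x a) * pm (x b))) := by
      rw [Mq_as_D β g p q hgpq]
      refine Finset.sum_congr rfl (fun x _ => ?_)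
      have h1 : F x * ((pm (x p) * pm (x q)) * (pm (x a) * pm (x b)))
          = D x * (pm (x p) * pm (x q)) * ((pm (x a) * pm (x a)) * (pm (x b) * pm (x b))) := by
        rw [hF]; ring
      rw [h1, pm_sq, pm_sq]
      rw [hD]
      ring
    have hchi : ∀ x : Fin d → Bool,
        (pm (x p) * pm (x q)) * (pm (x a) * pm (x b)) = 1 ∨
          (pm (x p) * pm (x q)) * (pm (x a) * pm (x b)) = -1 := by
      intro x
      rcases pm_cases (x p) with h1 | h1 <;> rcases pm_cases (x q) with h2 | h2 <;>
        rcases pm_cases (x a) with h3 | h3 <;> rcases pm_cases (x b) with h4 | h4 <;>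
        rw [h1, h2, h3, h4] <;> norm_num
    obtain ⟨x0, hx0⟩ := chi_neg_exists p q a b hpq hnepq
    have hx1 : (pm ((fun _ => true) p : Bool) * pm ((fun _ => true) q : Bool))
        * (pm ((fun _ => true) a : Bool) * pm ((fun _ => true) b : Bool)) = 1 := by
      norm_num [pm]
    have hcore : |Mq β p q| < |Mq β a b| := by
      rcases hba.lt_or_gt with hneg | hpos
      · -- β a b < 0 : use f = -F
        have habs : |Mq β a b| = ∑ x : Fin d → Bool, - F x := by
          have hlt : Mq β a b < 0 := by
            rw [hMab]; exact Finset.sum_neg (fun x _ => hFneg hneg x) hneuniv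
          rw [abs_of_neg hlt, hMab, Finset.sum_neg_distrib]
        rw [hMpq, habs]
        refine abs_sum_lt (fun x => - F x)
          (fun x => F x * ((pm (x p) * pm (x q)) * (pm (x a) * pm (x b))))
          (fun x => by linarith [hFneg hneg x])
          (fun x => by
            rcases hchi x with hx | hx <;> rw [hx] <;> [right; left] <;> ring)
          x0 (fun _ => true) (by rw [hx0]; ring)
          (by rw [hx1]; ring)
      · -- 0 < β a b : use f = F
        have habs : |Mq β a b| = ∑ x : Fin d → Bool, F x := by
          have hlt : 0 < Mq β a b := by
            rw [hMab]; exact Finset.sum_pos (fun x _ => hFpos hpos x) hneuniv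
          rw [abs_of_pos hlt, hMab]
        rw [hMpq, habs]
        refine abs_sum_lt F
          (fun x => F x * ((pm (x p) * pm (x q)) * (pm (x a) * pm (x b))))
          (fun x => hFpos hpos x)
          (fun x => by
            rcases hchi x with hx | hx <;> rw [hx] <;> [left; right] <;> ring)
          (fun _ => true) x0 (by rw [hx1]; ring)
          (by rw [hx0]; ring)
    exact div_lt_div_of_pos_right hcore h2d

open scoped Classical in
lemma wgt_zero {d : ℕ} (β : Fin d → Fin d → ℝ) (hacyc : (interGraph d β).IsAcyclic)
    (p q : Fin d) (hpq : p ≠ q) (g : Fin d → Bool) (hg : g p ≠ g q)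
    (hcut : ∀ u v : Fin d, β u v ≠ 0 → u ≠ v → g u = g v) : wgt d β s(p, q) = 0 := by
  have hflip : flipB g β = β := by
    funext u v
    by_cases huv : u = v
    · subst huv; simp [flipB]
    · by_cases hb : β u v = 0
      · simp [flipB, hb]
      · simp [flipB, hcut u v hb huv]
  have h := Mq_flipB_neg β g p q hg
  rw [hflip] at h
  have hM : Mq β p q = 0 := by linarith
  rw [wgt_eq β hacyc p q hpq, hM, abs_zero, zero_div]

open scoped Classical in
lemma edge_in_tree {d : ℕ} (hd : 2 ≤ d) (β : Fin d → Fin d → ℝ)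
    (hsymm : ∀ i j, β i j = β j i) (hacyc : (interGraph d β).IsAcyclic)
    (T : Finset (Sym2 (Fin d))) (hT : IsMaxSpanningTree (wgt d β) T)
    (a b : Fin d) (hab : a ≠ b) (hba : β a b ≠ 0) :
    s(a, b) ∈ T ∧ 0 < wgt d β s(a, b) := by
  obtain ⟨⟨hcard, hnondiag, hconn, hTacyc⟩, hmax⟩ := hT
  set G := interGraph d β with hG
  set H := SimpleGraph.fromEdgeSet (T : Set (Sym2 (Fin d))) with hH
  have hadj : G.Adj a b := by
    rw [hG, interGraph, SimpleGraph.fromRel_adj]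
    exact ⟨hab, Or.inl hba⟩
  obtain ⟨g, hgab, hcutOr⟩ := exists_cut G hacyc hadj
  have hcutβ : ∀ u v : Fin d, β u v ≠ 0 → u ≠ v → (s(u, v) = s(a, b) ∨ g u = g v) := by
    intro u v hb huv
    exact hcutOr u v (by rw [hG, interGraph, SimpleGraph.fromRel_adj]; exact ⟨huv, Or.inl hb⟩)
  obtain ⟨hwpos, hcmp⟩ := main_compare β hsymm hacyc hab hba g hgab hcutβ
  refine ⟨?_, hwpos⟩
  by_contra hfT
  -- take a path from a to b in H and find a g-boundary dart on it
  obtain ⟨W⟩ := hconn.preconnected a b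
  have hPpath := W.bypass_isPath
  obtain ⟨dart, hdmem, hS1, hS2⟩ := W.bypass.exists_boundary_dart {v | g v = g a}
    (by simp) (by simpa using hgab.symm)
  set p := dart.toProd.1 with hp
  set q := dart.toProd.2 with hq
  have hHpq : H.Adj p q := dart.adj
  have hpq : p ≠ q := hHpq.ne
  have hgpq : g p ≠ g q := by
    intro h
    exact hS2 (by rw [Set.mem_setOf_eq, ← h]; exact hS1)
  have he'T : s(p, q) ∈ T := by
    have := (SimpleGraph.fromEdgeSet_adj _).mp hHpq
    exact Finset.mem_coe.mp this.1
  have he'ne : s(p, q) ≠ s(a, b) := fun h => hfT (h ▸ he'T)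
  have hwlt : wgt d β s(p, q) < wgt d β s(a, b) := hcmp p q hpq hgpq he'ne
  -- build the exchanged tree T'
  set T' : Finset (Sym2 (Fin d)) := insert s(a, b) (T.erase s(p, q)) with hT'
  have hfnotE : s(a, b) ∉ T.erase s(p, q) := fun h => hfT (Finset.mem_of_mem_erase h)
  -- K = T minus the edge e'
  set K := SimpleGraph.fromEdgeSet ((T.erase s(p, q) : Finset (Sym2 (Fin d))) : Set (Sym2 (Fin d))) with hK
  have hKH : K ≤ H :=
    SimpleGraph.fromEdgeSet_mono (Finset.coe_subset.mpr (Finset.erase_subset _ _))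
  have hKdel : K ≤ H \ SimpleGraph.fromEdgeSet {s(p, q)} := by
    intro u w huw
    rw [hK, SimpleGraph.fromEdgeSet_adj] at huw
    obtain ⟨hmem', hne'⟩ := huw
    rw [Finset.mem_coe, Finset.mem_erase] at hmem'
    rw [SimpleGraph.sdiff_adj]
    constructor
    · rw [hH, SimpleGraph.fromEdgeSet_adj]; exact ⟨hmem'.2, hne'⟩
    · rw [SimpleGraph.fromEdgeSet_adj]
      rintro ⟨h1, -⟩
      exact hmem'.1 (by simpa using h1)
  have hbridge : ¬ (H \ SimpleGraph.fromEdgeSet {s(p, q)}).Reachable p q := by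
    have h1 : H.IsBridge s(p, q) :=
      (SimpleGraph.isAcyclic_iff_forall_edge_isBridge.mp hTacyc)
        ((SimpleGraph.mem_edgeSet H).mpr hHpq)
    exact SimpleGraph.isBridge_iff.mp h1
  have hKpq : ¬ K.Reachable p q := fun r => hbridge (r.mono hKdel)
  have hsurg : ∀ u v : Fin d, H.Adj u v → s(u, v) ≠ s(p, q) → K.Adj u v := by
    intro u v huv hne'
    rw [hK, SimpleGraph.fromEdgeSet_adj]
    have := (SimpleGraph.fromEdgeSet_adj _).mp huv
    exact ⟨Finset.mem_coe.mpr (Finset.mem_erase.mpr ⟨hne', Finset.mem_coe.mp this.1⟩), this.2⟩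
  have ktrich : ∀ x : Fin d, K.Reachable p x ∨ K.Reachable q x := by
    intro x
    obtain ⟨Wx⟩ := hconn.preconnected p x
    rcases walk_surgery H K p q hsurg Wx with h1 | ⟨h2a, h2b⟩ | ⟨h3a, h3b⟩
    · exact Or.inl h1
    · exact Or.inr h2b
    · exact Or.inl h3b
  -- the cut function of the bridge e' in H
  set k : Fin d → Bool := fun x => decide (K.Reachable p x) with hk
  have hksame : ∀ u v : Fin d, H.Adj u v → s(u, v) ≠ s(p, q) → k u = k v := by
    intro u v huv hne'
    have hKadj := hsurg u v huv hne'
    rw [hk]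
    simp only [decide_eq_decide]
    exact ⟨fun r => r.trans hKadj.reachable, fun r => r.trans hKadj.symm.reachable⟩
  have hkdiff : ∀ u v : Fin d, H.Adj u v → s(u, v) = s(p, q) → k u ≠ k v := by
    intro u v huv he'
    have hkp : k p = true := decide_eq_true (SimpleGraph.Reachable.refl p)
    have hkq : k q = false := decide_eq_false hKpq
    rcases Sym2.eq_iff.mp he' with ⟨rfl, rfl⟩ | ⟨rfl, rfl⟩
    · rw [hkp, hkq]; simp
    · rw [hkp, hkq]; simp
  have hkab : k a ≠ k b := by
    intro hkeq
    have hpar := (walk_parity H k s(p, q) hksame hkdiff W.bypass).mp hkeq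
    have hedgemem : s(p, q) ∈ W.bypass.edges := by
      have : dart.edge ∈ W.bypass.edges := List.mem_map_of_mem hdmem
      exact this
    rw [List.count_eq_one_of_mem hPpath.isTrail.edges_nodup hedgemem] at hpar
    simp at hpar
  have hnrp : ∀ x : Fin d, K.Reachable q x → ¬ K.Reachable p x :=
    fun x hqx hpx => hKpq (hpx.trans hqx.symm)
  have hsides : (K.Reachable p a ∧ K.Reachable q b) ∨ (K.Reachable p b ∧ K.Reachable q a) := by
    rcases ktrich a with ha | ha <;> rcases ktrich b with hb' | hb'
    · exact absurd ((decide_eq_true ha).trans (decide_eq_true hb').symm) hkab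
    · exact Or.inl ⟨ha, hb'⟩
    · exact Or.inr ⟨hb', ha⟩
    · exact absurd ((decide_eq_false (hnrp a ha)).trans (decide_eq_false (hnrp b hb')).symm) hkab
  -- H' = the exchanged graph
  set H' := SimpleGraph.fromEdgeSet ((T' : Finset (Sym2 (Fin d))) : Set (Sym2 (Fin d))) with hH'
  have hKH' : K ≤ H' := by
    apply SimpleGraph.fromEdgeSet_mono
    rw [hT']
    exact Finset.coe_subset.mpr (Finset.subset_insert _ _)
  have hadjab' : H'.Adj a b := by
    rw [hH', SimpleGraph.fromEdgeSet_adj]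
    exact ⟨Finset.mem_coe.mpr (by rw [hT']; exact Finset.mem_insert_self _ _), hab⟩
  have hH'conn : H'.Connected := by
    rw [SimpleGraph.connected_iff]
    have hno : Nonempty (Fin d) := ⟨a⟩
    refine ⟨?_, hno⟩
    have hxa : ∀ x : Fin d, H'.Reachable x a := by
      intro x
      rcases ktrich x with hx | hx
      · rcases hsides with ⟨hpa, -⟩ | ⟨hpb, -⟩
        · exact (hx.symm.trans hpa).mono hKH'
        · exact ((hx.symm.trans hpb).mono hKH').trans hadjab'.symm.reachable
      · rcases hsides with ⟨-, hqb⟩ | ⟨-, hqa⟩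
        · exact ((hx.symm.trans hqb).mono hKH').trans hadjab'.symm.reachable
        · exact (hx.symm.trans hqa).mono hKH'
    intro x y
    exact (hxa x).trans (hxa y).symm
  have hKacyc : K.IsAcyclic := acyclic_mono hKH hTacyc
  have hKnab : ¬ K.Reachable a b := by
    intro rab
    rcases hsides with ⟨hpa, hqb⟩ | ⟨hpb, hqa⟩
    · exact hKpq (hpa.trans (rab.trans hqb.symm))
    · exact hKpq ((hpb.trans rab.symm).trans hqa.symm)
  have hH'acyc : H'.IsAcyclic := by
    intro v c hc
    by_cases hfe : s(a, b) ∈ c.edges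
    · have hH'del : H' \ SimpleGraph.fromEdgeSet {s(a, b)} ≤ K := by
        intro u w huw
        rw [SimpleGraph.sdiff_adj] at huw
        obtain ⟨h1, h2⟩ := huw
        rw [hH', SimpleGraph.fromEdgeSet_adj] at h1
        obtain ⟨hmem', hne'⟩ := h1
        rw [Finset.mem_coe, hT', Finset.mem_insert] at hmem'
        rcases hmem' with heq | hmem'
        · exact absurd ((SimpleGraph.fromEdgeSet_adj _).mpr ⟨by simp [heq], hne'⟩) h2
        · rw [hK, SimpleGraph.fromEdgeSet_adj]
          exact ⟨Finset.mem_coe.mpr hmem', hne'⟩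
      have hreach : (H' \ SimpleGraph.fromEdgeSet {s(a, b)}).Reachable a b :=
        (SimpleGraph.adj_and_reachable_delete_edges_iff_exists_cycle.mpr ⟨v, c, hc, hfe⟩).2
      exact hKnab (hreach.mono hH'del)
    · have hsubc : ∀ e ∈ c.edges, e ∈ K.edgeSet := by
        intro e he
        have h1 := c.edges_subset_edgeSet he
        rw [hH', SimpleGraph.edgeSet_fromEdgeSet, Set.mem_diff] at h1
        obtain ⟨hmem', hnd⟩ := h1
        rw [Finset.mem_coe, hT', Finset.mem_insert] at hmem'
        rcases hmem' with heq | hmem'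
        · exact absurd (heq ▸ he) hfe
        · rw [hK, SimpleGraph.edgeSet_fromEdgeSet, Set.mem_diff]
          exact ⟨Finset.mem_coe.mpr hmem', hnd⟩
      exact hKacyc (c.transfer K hsubc) (hc.transfer hsubc)
  have hT'card : T'.card = Fintype.card (Fin d) - 1 := by
    rw [hT', Finset.card_insert_of_notMem hfnotE, Finset.card_erase_of_mem he'T]
    rw [Fintype.card_fin] at hcard ⊢
    omega
  have hT'nondiag : ∀ e ∈ T', ¬ e.IsDiag := by
    intro e he
    rw [hT', Finset.mem_insert] at he
    rcases he with rfl | he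
    · rw [Sym2.mk_isDiag_iff]; exact hab
    · exact hnondiag e (Finset.mem_of_mem_erase he)
  have hT'span : IsSpanningTree T' := ⟨hT'card, hT'nondiag, hH'conn, hH'acyc⟩
  have hsum := hmax T' hT'span
  have hsplit : ∑ e ∈ T', wgt d β e
      = wgt d β s(a, b) + ∑ e ∈ T.erase s(p, q), wgt d β e := by
    rw [hT', Finset.sum_insert hfnotE]
  have herase := Finset.sum_erase_add T (wgt d β) he'T
  rw [hsplit] at hsum
  linarith

/-- Theorem 2, Acyclic graphs: if the interaction graph is acyclic and `T`
is a maximum-weight spanning tree of the complete graph on `V` with respect to the influence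
weight assignment `w`, then `{i,j} ∈ I` iff `{i,j} ∈ T` and `w_{{i,j}} > 0`. -/
theorem statement6 (d : ℕ) (hd : 2 ≤ d) (β : Fin d → Fin d → ℝ)
    (hsymm : ∀ i j, β i j = β j i)
    (hacyc : (interGraph d β).IsAcyclic)
    (T : Finset (Sym2 (Fin d))) (hT : IsMaxSpanningTree (wgt d β) T)
    (i j : Fin d) (hij : i ≠ j) :
    β i j ≠ 0 ↔ s(i, j) ∈ T ∧ 0 < wgt d β s(i, j) := by
  classical
  constructor
  · intro hb
    exact edge_in_tree hd β hsymm hacyc T hT i j hij hb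
  · rintro ⟨hmem, hpos⟩
    by_contra hb0
    set G := interGraph d β with hG
    set H := SimpleGraph.fromEdgeSet (T : Set (Sym2 (Fin d))) with hH
    obtain ⟨⟨hcard, hnondiag, hconn, hTacyc⟩, hmax⟩ := hT
    -- i and j must be connected in G (otherwise wgt = 0)
    have hreach : G.Reachable i j := by
      by_contra hnr
      have hcut : ∀ u v : Fin d, β u v ≠ 0 → u ≠ v →
          (fun x => decide (G.Reachable i x)) u = (fun x => decide (G.Reachable i x)) v := by
        intro u v hb huv
        have hadj : G.Adj u v := by
          rw [hG, interGraph, SimpleGraph.fromRel_adj]; exact ⟨huv, Or.inl hb⟩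
        simp only [decide_eq_decide]
        exact ⟨fun r => r.trans hadj.reachable, fun r => r.trans hadj.symm.reachable⟩
      have hgij : (fun x => decide (G.Reachable i x)) i ≠ (fun x => decide (G.Reachable i x)) j := by
        simp only
        rw [decide_eq_true (SimpleGraph.Reachable.refl i), decide_eq_false hnr]
        simp
      have := wgt_zero β hacyc i j hij _ hgij hcut
      rw [this] at hpos
      exact lt_irrefl 0 hpos
    obtain ⟨W⟩ := hreach
    have hnadj : ¬ G.Adj i j := by
      rw [hG, interGraph, SimpleGraph.fromRel_adj]
      rintro ⟨-, h | h⟩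
      · exact h hb0
      · exact h ((hsymm j i).trans hb0)
    have hfnotW : s(i, j) ∉ W.edges := fun hmem' =>
      hnadj ((SimpleGraph.mem_edgeSet G).mp (W.edges_subset_edgeSet hmem'))
    -- every G-edge is in T
    have hGT : ∀ e : Sym2 (Fin d), e ∈ G.edgeSet → e ∈ (T : Set (Sym2 (Fin d))) ∧ ¬ e.IsDiag := by
      intro e
      induction e using Sym2.ind with
      | _ u v =>
        intro he
        have hadj : G.Adj u v := (SimpleGraph.mem_edgeSet G).mp he
        rw [hG, interGraph, SimpleGraph.fromRel_adj] at hadj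
        obtain ⟨huv, hb⟩ := hadj
        have hbuv : β u v ≠ 0 := by
          rcases hb with h | h
          · exact h
          · intro h0; exact h ((hsymm v u).trans h0)
        refine ⟨Finset.mem_coe.mpr
          (edge_in_tree hd β hsymm hacyc T ⟨⟨hcard, hnondiag, hconn, hTacyc⟩, hmax⟩
            u v huv hbuv).1, ?_⟩
        rw [Sym2.mk_isDiag_iff]; exact huv
    have hWsub : ∀ e ∈ W.edges, e ∈ (H \ SimpleGraph.fromEdgeSet {s(i, j)}).edgeSet := by
      intro e he
      have heG := W.edges_subset_edgeSet he
      obtain ⟨hmemT, hnd⟩ := hGT e heG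
      rw [SimpleGraph.edgeSet_sdiff, Set.mem_diff]
      constructor
      · rw [hH, SimpleGraph.edgeSet_fromEdgeSet, Set.mem_diff]
        exact ⟨hmemT, hnd⟩
      · rw [SimpleGraph.edgeSet_fromEdgeSet, Set.mem_diff]
        rintro ⟨h1, -⟩
        have : e = s(i, j) := by simpa using h1
        exact hfnotW (this ▸ he)
    have hHadj : H.Adj i j := by
      rw [hH, SimpleGraph.fromEdgeSet_adj]
      exact ⟨Finset.mem_coe.mpr hmem, hij⟩
    obtain ⟨v, c, hc, -⟩ :=
      SimpleGraph.adj_and_reachable_delete_edges_iff_exists_cycle.mp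
        ⟨hHadj, ⟨W.transfer _ hWsub⟩⟩
    exact hTacyc c hc
end
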